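/- arXiv:2601.00048 — 2 statements merged into one kernel-verified Lean document; each statement's English description precedes it below -/
import Mathlib

section
/- Let φ : (P_5)_{18} → (P_5)_{41} be the map u ↦ x_1x_2x_3x_4x_5·u^2. The subspace of Q^{⊗5}_{41} spanned by the classes [φ(u)], where u ranges over the admissible monomials of degree 18 in P_5, is isomorphic as an F_2-vector space to Q^{⊗5}_{18}; moreover Q^{⊗5}_{41} is the direct sum of this subspace and the kernel of Kameko's squaring operation (Sq^0_*)_{(5,41)}. -/
open MvPolynomial

noncomputable section

/-- The polynomial algebra `P_m = F_2[x_1, …, x_m]`. -/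
abbrev PolyF2 (m : ℕ) : Type := MvPolynomial (Fin m) (ZMod 2)

/-- The total Steenrod square, the algebra endomorphism sending each `x_i` to `x_i + x_i^2`. -/
def sqTot (m : ℕ) : PolyF2 m →ₐ[ZMod 2] PolyF2 m :=
  aeval (fun i => X i + X i ^ 2)

/-- The `k`-th Steenrod square `Sq^k : P_m → P_m`: on a homogeneous polynomial of degree `n`
it is the degree `n + k` homogeneous component of the total square. -/
def SteenrodSq (m k : ℕ) (f : PolyF2 m) : PolyF2 m :=
  ∑ n ∈ Finset.range (f.totalDegree + 1),
    homogeneousComponent (n + k) (sqTot m (homogeneousComponent n f))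

/-- The submodule of hit polynomials, `Σ_{k ≥ 1} Sq^k(P_m)`. -/
def hitSubmodule (m : ℕ) : Submodule (ZMod 2) (PolyF2 m) :=
  Submodule.span (ZMod 2) {g | ∃ k, 1 ≤ k ∧ ∃ f, g = SteenrodSq m k f}

/-- The homogeneous component `(P_m)_n` as a submodule. -/
abbrev homogSub (m n : ℕ) : Submodule (ZMod 2) (PolyF2 m) :=
  homogeneousSubmodule (Fin m) (ZMod 2) n

/-- The cohit space `Q^{⊗m}_n = (P_m)_n / ((P_m)_n ∩ Σ_{k≥1} Sq^k(P_m))`. -/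
abbrev CohitQ (m n : ℕ) : Type :=
  homogSub m n ⧸ ((hitSubmodule m).comap (homogSub m n).subtype)

/-- Total degree of a monomial exponent vector. -/
def mdeg {m : ℕ} (u : Fin m →₀ ℕ) : ℕ := ∑ j, u j

lemma monomial_mem_homogSub {m n : ℕ} (u : Fin m →₀ ℕ) (h : mdeg u = n) :
    (monomial u (1 : ZMod 2)) ∈ homogSub m n := by
  rw [mem_homogeneousSubmodule]
  apply isHomogeneous_monomial
  rw [Finsupp.degree, ← h, mdeg]
  exact Finset.sum_subset (Finset.subset_univ _)
    (fun x _ hx => Finsupp.notMem_support_iff.mp hx)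

/-- The class in `Q^{⊗m}_n` of the monomial with exponent vector `u`
(`0` if `u` does not have degree `n`). -/
def clsQ (m n : ℕ) (u : Fin m →₀ ℕ) : CohitQ m n :=
  if h : mdeg u = n then
    Submodule.Quotient.mk ⟨monomial u 1, monomial_mem_homogSub u h⟩
  else 0

/-- `α_t(a)`, the coefficient of `2^t` in the binary expansion of `a`. -/
def bitAt (a t : ℕ) : ℕ := a / 2 ^ t % 2

/-- The parameter vector of a monomial: `mParam u t = Σ_j α_t(u_j)`
(this is `Param_{t+1}` in 1-based indexing). -/
def mParam {m : ℕ} (u : Fin m →₀ ℕ) : ℕ → ℕ := fun t => ∑ j, bitAt (u j) t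

/-- Left-lexicographic strict order on sequences. -/
def seqLt (a b : ℕ → ℕ) : Prop := ∃ i, (∀ j, j < i → a j = b j) ∧ a i < b i

/-- Left-lexicographic strict order on exponent vectors. -/
def expLt {m : ℕ} (u v : Fin m →₀ ℕ) : Prop :=
  ∃ i : Fin m, (∀ j, j < i → u j = v j) ∧ u i < v i

/-- The linear order on monomials of the same degree : first compare parameter vectors
left-lexicographically, then exponent vectors left-lexicographically. -/
def monLt {m : ℕ} (u v : Fin m →₀ ℕ) : Prop :=
  mdeg u = mdeg v ∧
    (seqLt (mParam u) (mParam v) ∨ (mParam u = mParam v ∧ expLt u v))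

/-- A monomial is nonadmissible if it is congruent, modulo hit polynomials,
to a sum of strictly smaller monomials. -/
def Nonadmissible {m : ℕ} (u : Fin m →₀ ℕ) : Prop :=
  ∃ S : Finset (Fin m →₀ ℕ), (∀ v ∈ S, monLt v u) ∧
    monomial u (1 : ZMod 2) + ∑ v ∈ S, monomial v (1 : ZMod 2) ∈ hitSubmodule m

/-- A monomial is admissible if it is not nonadmissible. -/
def Admissible {m : ℕ} (u : Fin m →₀ ℕ) : Prop := ¬ Nonadmissible u

/-- The degree `Σ_i 2^i ω_i` of a (0-indexed) parameter vector. -/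
def degOmega (ω : ℕ →₀ ℕ) : ℕ := ω.sum fun i c => 2 ^ i * c

/-- A parameter vector given by a list (0-indexed). -/
def pfin (l : List ℕ) : ℕ →₀ ℕ :=
  ∑ i ∈ Finset.range l.length, Finsupp.single i (l.getD i 0)

/-- A parameter vector, as a plain sequence, given by a list (0-indexed). -/
def pvec (l : List ℕ) : ℕ → ℕ := fun t => l.getD t 0

/-- `P_m^{≤ω}`: the span of the monomials of degree `deg ω` with parameter vector `≤ ω`. -/
def PLe (m : ℕ) (ω : ℕ →₀ ℕ) : Submodule (ZMod 2) (PolyF2 m) :=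
  Submodule.span (ZMod 2)
    {f | ∃ u : Fin m →₀ ℕ, f = monomial u 1 ∧ mdeg u = degOmega ω ∧
      (mParam u = ⇑ω ∨ seqLt (mParam u) ⇑ω)}

/-- `P_m^{<ω}`: the span of the monomials of degree `deg ω` with parameter vector `< ω`. -/
def PLt (m : ℕ) (ω : ℕ →₀ ℕ) : Submodule (ZMod 2) (PolyF2 m) :=
  Submodule.span (ZMod 2)
    {f | ∃ u : Fin m →₀ ℕ, f = monomial u 1 ∧ mdeg u = degOmega ω ∧
      seqLt (mParam u) ⇑ω}

/-- The localized cohit space `(Q^{⊗m})^ω = P_m^{≤ω} / (P_m^{≤ω} ∩ (hit + P_m^{<ω}))`. -/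
abbrev CohitLoc (m : ℕ) (ω : ℕ →₀ ℕ) : Type :=
  PLe m ω ⧸ ((hitSubmodule m ⊔ PLt m ω).comap (PLe m ω).subtype)

open Classical in
/-- The class `[X]_ω` in `(Q^{⊗m})^ω` of the monomial with exponent vector `u`
(`0` if the monomial does not lie in `P_m^{≤ω}`). -/
def clsLoc (m : ℕ) (ω : ℕ →₀ ℕ) (u : Fin m →₀ ℕ) : CohitLoc m ω :=
  if h : (monomial u (1 : ZMod 2)) ∈ PLe m ω then
    Submodule.Quotient.mk ⟨monomial u 1, h⟩
  else 0

/-- The action of a matrix on `P_m` by linear substitution of the variables. -/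
def matAct (m : ℕ) (g : Matrix (Fin m) (Fin m) (ZMod 2)) : PolyF2 m →ₐ[ZMod 2] PolyF2 m :=
  aeval (fun i => ∑ j, C (g i j) * X j)

/-- A class in `Q^{⊗5}_n` is `GL(5,F_2)`-invariant if it is the class of some `F` such that
`g·F + F` is hit for every `g ∈ GL(5,F_2)`. -/
def IsGLInv (n : ℕ) (q : CohitQ 5 n) : Prop :=
  ∃ F : homogSub 5 n, Submodule.Quotient.mk F = q ∧
    ∀ g : Matrix.GeneralLinearGroup (Fin 5) (ZMod 2),
      matAct 5 (g : Matrix (Fin 5) (Fin 5) (ZMod 2)) (F : PolyF2 5) + (F : PolyF2 5) ∈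
        hitSubmodule 5

/-- A class in `(Q^{⊗5})^ω` is `GL(5,F_2)`-invariant if it is the class of some `F ∈ P_5^{≤ω}`
such that `g·F + F ∈ Σ_{k≥1} Sq^k(P_5) + P_5^{<ω}` for every `g ∈ GL(5,F_2)`. -/
def IsGLInvLoc (ω : ℕ →₀ ℕ) (q : CohitLoc 5 ω) : Prop :=
  ∃ F : PLe 5 ω, Submodule.Quotient.mk F = q ∧
    ∀ g : Matrix.GeneralLinearGroup (Fin 5) (ZMod 2),
      matAct 5 (g : Matrix (Fin 5) (Fin 5) (ZMod 2)) (F : PolyF2 5) + (F : PolyF2 5) ∈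
        hitSubmodule 5 ⊔ PLt 5 ω

/-- A class in `(Q^{⊗5})^ω` is `Σ_5`-invariant if it is the class of some `F ∈ P_5^{≤ω}`
such that `σ·F + F ∈ Σ_{k≥1} Sq^k(P_5) + P_5^{<ω}` for every permutation `σ` of the
variables. -/
def IsPermInvLoc (ω : ℕ →₀ ℕ) (q : CohitLoc 5 ω) : Prop :=
  ∃ F : PLe 5 ω, Submodule.Quotient.mk F = q ∧
    ∀ σ : Equiv.Perm (Fin 5),
      rename (⇑σ) (F : PolyF2 5) + (F : PolyF2 5) ∈ hitSubmodule 5 ⊔ PLt 5 ω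

/-- Halving an (odd) exponent vector: `u ↦ (u - 1)/2` componentwise. -/
def halfExp {m : ℕ} (u : Fin m →₀ ℕ) : Fin m →₀ ℕ :=
  Finsupp.equivFunOnFinite.symm fun i => (u i - 1) / 2

open Classical in
/-- Kameko's squaring operation `(Sq^0_*)_{(5,41)} : Q^{⊗5}_{41} → Q^{⊗5}_{18}`:
the linear map sending the class of a monomial `x^u` of degree `41` to the class of
`x^{(u-1)/2}` if all the exponents `u_i` are odd, and to `0` otherwise. -/
def IsKameko (ψ : CohitQ 5 41 →ₗ[ZMod 2] CohitQ 5 18) : Prop :=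
  ∀ u : Fin 5 →₀ ℕ, mdeg u = 41 →
    ψ (clsQ 5 41 u) = if ∀ i, Odd (u i) then clsQ 5 18 (halfExp u) else 0

/-- Exponent vector from a function. -/
def ev {m : ℕ} (f : Fin m → ℕ) : Fin m →₀ ℕ := Finsupp.equivFunOnFinite.symm f


end

noncomputable section

/-- `Σ_{k=1}^{K} Sq^k(P_m)`. -/
def hitUpTo (m K : ℕ) : Submodule (ZMod 2) (PolyF2 m) :=
  Submodule.span (ZMod 2) {g | ∃ k, 1 ≤ k ∧ k ≤ K ∧ ∃ f, g = SteenrodSq m k f}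

/-- A monomial with parameter vector `ω` (and `2^{r-1} = K` where `r = max{i : ω_i > 0}`)
is strictly nonadmissible if it is congruent, modulo `Σ_{k=1}^{K} Sq^k(P_m) + P_m^{<ω}`,
to a sum of strictly smaller monomials. -/
def StrictlyNonadmissible (m K : ℕ) (ω : ℕ →₀ ℕ) (u : Fin m →₀ ℕ) : Prop :=
  ∃ S : Finset (Fin m →₀ ℕ), (∀ v ∈ S, monLt v u) ∧
    monomial u (1 : ZMod 2) + ∑ v ∈ S, monomial v (1 : ZMod 2) ∈
      hitUpTo m K ⊔ PLt m ω

end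


noncomputable section

/-- The exponent vector of `φ(x^u) = x_1x_2x_3x_4x_5·(x^u)^2`. -/
def phiExp (u : Fin 5 →₀ ℕ) : Fin 5 →₀ ℕ :=
  Finsupp.equivFunOnFinite.symm fun i => 2 * u i + 1

/-- The subspace of `Q^{⊗5}_{41}` spanned by the classes `[φ(u)]` where `u` ranges over the
admissible monomials of degree `18` in `P_5`. -/
def Wphi : Submodule (ZMod 2) (CohitQ 5 41) :=
  Submodule.span (ZMod 2)
    {q | ∃ u : Fin 5 →₀ ℕ, mdeg u = 18 ∧ Admissible u ∧ q = clsQ 5 41 (phiExp u)}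

namespace KA

open Finsupp Finset

lemma degree_eq_mdeg {m : ℕ} (u : Fin m →₀ ℕ) : u.degree = mdeg u := by
  rw [Finsupp.degree, mdeg]
  exact Finset.sum_subset (Finset.subset_univ _)
    (fun x _ hx => Finsupp.notMem_support_iff.mp hx)

lemma halfExp_apply {m : ℕ} (u : Fin m →₀ ℕ) (i : Fin m) : halfExp u i = (u i - 1) / 2 := rfl

lemma phiExp_apply (u : Fin 5 →₀ ℕ) (i : Fin 5) : phiExp u i = 2 * u i + 1 := rfl

lemma halfExp_phiExp (u : Fin 5 →₀ ℕ) : halfExp (phiExp u) = u :=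
  Finsupp.ext fun i => by rw [halfExp_apply, phiExp_apply]; omega

lemma phiExp_oddAll (u : Fin 5 →₀ ℕ) : ∀ i, Odd (phiExp u i) := fun i => by
  rw [phiExp_apply]; exact odd_two_mul_add_one _

lemma phiExp_halfExp {u : Fin 5 →₀ ℕ} (h : ∀ i, Odd (u i)) : phiExp (halfExp u) = u :=
  Finsupp.ext fun i => by
    have hi := h i; rw [Nat.odd_iff] at hi
    rw [phiExp_apply, halfExp_apply]; omega

lemma eq_phiExp_iff {u w : Fin 5 →₀ ℕ} :
    u = phiExp w ↔ ((∀ i, Odd (u i)) ∧ halfExp u = w) := by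
  constructor
  · rintro rfl; exact ⟨phiExp_oddAll w, halfExp_phiExp w⟩
  · rintro ⟨h, rfl⟩; exact (phiExp_halfExp h).symm

lemma mdeg_phiExp (u : Fin 5 →₀ ℕ) : mdeg (phiExp u) = 2 * mdeg u + 5 := by
  simp only [mdeg, phiExp_apply, Finset.sum_add_distrib, ← Finset.mul_sum]
  simp

lemma mdeg_halfExp_of_odd {u : Fin 5 →₀ ℕ} (h : ∀ i, Odd (u i)) :
    2 * mdeg (halfExp u) + 5 = mdeg u := by
  rw [← mdeg_phiExp, phiExp_halfExp h]

open Classical in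
/-- The linear "halving" map underlying Kameko's operation. -/
noncomputable def psit : PolyF2 5 →ₗ[ZMod 2] PolyF2 5 :=
  Module.Basis.constr (MvPolynomial.basisMonomials (Fin 5) (ZMod 2)) (ZMod 2)
    fun u => if ∀ i, Odd (u i) then monomial (halfExp u) 1 else 0

lemma psit_monomial_one (u : Fin 5 →₀ ℕ) :
    psit (monomial u 1) = if ∀ i, Odd (u i) then monomial (halfExp u) 1 else 0 := by
  classical
  have : (monomial u (1 : ZMod 2)) = MvPolynomial.basisMonomials (Fin 5) (ZMod 2) u := by
    rw [MvPolynomial.coe_basisMonomials]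
  rw [this, psit, Module.Basis.constr_basis]

lemma psit_monomial (u : Fin 5 →₀ ℕ) (c : ZMod 2) :
    psit (monomial u c) = if ∀ i, Odd (u i) then monomial (halfExp u) c else 0 := by
  classical
  have h1 : (monomial u c) = c • monomial u (1 : ZMod 2) := by
    rw [MvPolynomial.smul_monomial, smul_eq_mul, mul_one]
  rw [h1, map_smul, psit_monomial_one]
  split_ifs
  · rw [MvPolynomial.smul_monomial, smul_eq_mul, mul_one]
  · rw [smul_zero]

lemma psit_coeff (f : PolyF2 5) (w : Fin 5 →₀ ℕ) :
    MvPolynomial.coeff w (psit f) = MvPolynomial.coeff (phiExp w) f := by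
  classical
  induction f using MvPolynomial.induction_on' with
  | monomial u c =>
    rw [psit_monomial]
    by_cases h : ∀ i, Odd (u i)
    · rw [if_pos h, MvPolynomial.coeff_monomial, MvPolynomial.coeff_monomial]
      by_cases h2 : halfExp u = w
      · rw [if_pos h2, if_pos (eq_phiExp_iff.mpr ⟨h, h2⟩)]
      · rw [if_neg h2, if_neg (fun hc => h2 (eq_phiExp_iff.mp hc).2)]
    · rw [if_neg h, MvPolynomial.coeff_zero, MvPolynomial.coeff_monomial,
        if_neg (fun hc => h (eq_phiExp_iff.mp hc).1)]
  | add p q hp hq => rw [map_add, MvPolynomial.coeff_add, MvPolynomial.coeff_add, hp, hq]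

end KA
namespace KA

open Finsupp Finset MvPolynomial

lemma zmod2_mul_self : ∀ c : ZMod 2, c * c = c := by decide

lemma sq_add (p q : PolyF2 5) : (p + q) ^ 2 = p ^ 2 + q ^ 2 := add_pow_char _ _ _

lemma psit_monomial_mul_sq (a : Fin 5 →₀ ℕ) (g : PolyF2 5) :
    psit (monomial a 1 * g ^ 2) =
      if ∀ i, Odd (a i) then monomial (halfExp a) 1 * g else 0 := by
  classical
  induction g using MvPolynomial.induction_on' with
  | monomial b c =>
    have h2 : (monomial b c : PolyF2 5) ^ 2 = monomial (b + b) c := by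
      rw [pow_two, monomial_mul, zmod2_mul_self]
    rw [h2, monomial_mul, one_mul, psit_monomial]
    have hcond : (∀ i, Odd ((a + (b + b)) i)) ↔ ∀ i, Odd (a i) := by
      constructor <;> intro h i <;> have hh := h i <;>
        simp only [Finsupp.add_apply, Nat.odd_iff] at hh ⊢ <;> omega
    by_cases h : ∀ i, Odd (a i)
    · rw [if_pos (hcond.mpr h), if_pos h, monomial_mul, one_mul]
      have hhalf : halfExp (a + (b + b)) = halfExp a + b := by
        apply Finsupp.ext; intro i
        have hi := h i; rw [Nat.odd_iff] at hi
        simp only [Finsupp.add_apply, halfExp_apply]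
        omega
      rw [hhalf]
    · rw [if_neg (fun hh => h (hcond.mp hh)), if_neg h]
  | add p q hp hq =>
    rw [sq_add, mul_add, map_add, hp, hq]
    split_ifs
    · rw [mul_add]
    · rw [add_zero]

lemma sqTot_monomial_one {m : ℕ} (u : Fin m →₀ ℕ) :
    sqTot m (monomial u 1) = ∏ i ∈ u.support, (X i + X i ^ 2) ^ u i := by
  rw [sqTot, aeval_monomial, map_one, one_mul]
  rfl

lemma prod_X_pow (t : Finset (Fin 5)) (c : ℕ) :
    (∏ i ∈ t, (X i : PolyF2 5) ^ c) = monomial (∑ i ∈ t, Finsupp.single i c) 1 := by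
  classical
  induction t using Finset.induction_on with
  | empty => simp [monomial_zero']
  | insert _ _ h ih =>
    rw [Finset.prod_insert h, ih, X_pow_eq_monomial, monomial_mul, one_mul,
      Finset.sum_insert h]

lemma sum_single_apply (t : Finset (Fin 5)) (c : ℕ) (j : Fin 5) :
    (∑ i ∈ t, Finsupp.single i c) j = if j ∈ t then c else 0 := by
  classical
  rw [Finset.sum_apply']
  simp [Finsupp.single_apply]

lemma psit_sqTot_monomial (u : Fin 5 →₀ ℕ) :
    psit (sqTot 5 (monomial u 1)) = sqTot 5 (psit (monomial u 1)) := by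
  classical
  set e : Fin 5 →₀ ℕ := ev fun i => u i % 2 with he
  set v : Fin 5 →₀ ℕ := ev fun i => u i / 2 with hv
  have he_apply : ∀ i, e i = u i % 2 := fun i => rfl
  have hv_apply : ∀ i, v i = u i / 2 := fun i => rfl
  set s := e.support with hs
  set G := sqTot 5 (monomial v 1) with hG
  have hmem : ∀ i, i ∈ s ↔ u i % 2 = 1 := by
    intro i
    rw [hs, Finsupp.mem_support_iff, he_apply]
    omega
  have he_one : ∀ i ∈ s, e i = 1 := by
    intro i hi; rw [he_apply, ← hmem]; exact hi
  have hdec : (monomial u 1 : PolyF2 5) = monomial e 1 * (monomial v 1) ^ 2 := by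
    rw [pow_two, monomial_mul, monomial_mul, one_mul, one_mul]
    have : e + (v + v) = u := by
      apply Finsupp.ext; intro i
      simp only [Finsupp.add_apply, he_apply, hv_apply]
      omega
    rw [this]
  set A : Finset (Fin 5) → (Fin 5 →₀ ℕ) :=
    fun t => (∑ i ∈ t, Finsupp.single i 1) + (∑ i ∈ s \ t, Finsupp.single i 2) with hA
  have hA_apply : ∀ t j, A t j = (if j ∈ t then 1 else 0) + (if j ∈ s \ t then 2 else 0) := by
    intro t j
    rw [hA]
    simp only [Finsupp.add_apply, sum_single_apply]
  have hexp : sqTot 5 (monomial e 1) = ∑ t ∈ s.powerset, monomial (A t) 1 := by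
    rw [sqTot_monomial_one, ← hs,
      Finset.prod_congr rfl (fun i hi => by rw [he_one i hi, pow_one]),
      Finset.prod_add]
    apply Finset.sum_congr rfl
    intro t _
    have h1 : (∏ i ∈ t, (X i : PolyF2 5)) = monomial (∑ i ∈ t, Finsupp.single i 1) 1 := by
      simpa using prod_X_pow t 1
    rw [h1, prod_X_pow, monomial_mul, one_mul]
  have hAcond : ∀ t ∈ s.powerset, ((∀ i, Odd (A t i)) ↔ (t = s ∧ s = Finset.univ)) := by
    intro t ht
    rw [Finset.mem_powerset] at ht
    constructor
    · intro h
      have htuniv : ∀ i, i ∈ t := by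
        intro i
        have := h i
        rw [hA_apply, Nat.odd_iff] at this
        by_contra hit
        rw [if_neg hit] at this
        split_ifs at this <;> omega
      have ht2 : t = Finset.univ := Finset.eq_univ_iff_forall.mpr htuniv
      have hs2 : s = Finset.univ := Finset.eq_univ_iff_forall.mpr fun i => ht (ht2 ▸ Finset.mem_univ i)
      exact ⟨ht2.trans hs2.symm, hs2⟩
    · rintro ⟨rfl, hsu⟩
      intro i
      rw [hA_apply, Nat.odd_iff, if_pos (hsu ▸ Finset.mem_univ i), if_neg (by simp)]
  have hodd_iff : (∀ i, Odd (u i)) ↔ s = Finset.univ := by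
    constructor
    · intro h
      apply Finset.eq_univ_iff_forall.mpr
      intro i; rw [hmem, ← Nat.odd_iff]; exact h i
    · intro h i
      rw [Nat.odd_iff, ← hmem, h]; exact Finset.mem_univ i
  have hterm : ∀ t ∈ s.powerset,
      psit (monomial (A t) 1 * G ^ 2) = if t = s ∧ s = Finset.univ then G else 0 := by
    intro t ht
    rw [psit_monomial_mul_sq]
    by_cases h : t = s ∧ s = Finset.univ
    · rw [if_pos ((hAcond t ht).mpr h), if_pos h]
      obtain ⟨rfl, hsu⟩ := h
      have hA1 : halfExp (A s) = 0 := by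
        apply Finsupp.ext; intro i
        rw [halfExp_apply, hA_apply]
        simp [Finset.sdiff_self, hsu]
      rw [hA1, monomial_zero', C_1, one_mul]
    · rw [if_neg (fun hh => h ((hAcond t ht).mp hh)), if_neg h]
  have hLHS : psit (sqTot 5 (monomial u 1)) = if s = Finset.univ then G else 0 := by
    rw [hdec, map_mul, map_pow, hexp, Finset.sum_mul, map_sum, ← hG,
      Finset.sum_congr rfl hterm]
    by_cases hsu : s = Finset.univ
    · have hone : ∀ t ∈ s.powerset,
          (if t = s ∧ s = Finset.univ then G else 0) = if t = s then G else 0 := by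
        intro t _
        by_cases h : t = s
        · rw [if_pos ⟨h, hsu⟩, if_pos h]
        · rw [if_neg (fun hh => h hh.1), if_neg h]
      rw [Finset.sum_congr rfl hone, Finset.sum_ite_eq' s.powerset s fun _ => G,
        if_pos (Finset.mem_powerset_self s), if_pos hsu]
    · rw [Finset.sum_eq_zero (fun t _ => if_neg (fun hh => hsu hh.2)), if_neg hsu]
  have hRHS : sqTot 5 (psit (monomial u 1)) = if s = Finset.univ then G else 0 := by
    rw [psit_monomial_one]
    by_cases hsu : s = Finset.univ
    · rw [if_pos (hodd_iff.mpr hsu), if_pos hsu]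
      have hvu : halfExp u = v := by
        apply Finsupp.ext; intro i
        have hi := hodd_iff.mpr hsu i
        rw [Nat.odd_iff] at hi
        rw [halfExp_apply, hv_apply]
        omega
      rw [hvu]
    · rw [if_neg (fun h => hsu (hodd_iff.mp h)), if_neg hsu, map_zero]
  rw [hLHS, hRHS]

lemma psit_sqTot (f : PolyF2 5) : psit (sqTot 5 f) = sqTot 5 (psit f) := by
  have : psit.comp (sqTot 5).toLinearMap = (sqTot 5).toLinearMap.comp psit := by
    apply Module.Basis.ext (MvPolynomial.basisMonomials (Fin 5) (ZMod 2))
    intro u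
    have hb : (MvPolynomial.basisMonomials (Fin 5) (ZMod 2)) u = monomial u 1 := by
      rw [MvPolynomial.coe_basisMonomials]
    rw [hb]
    exact psit_sqTot_monomial u
  exact LinearMap.congr_fun this f

end KA
namespace KA

open Finsupp Finset MvPolynomial

lemma psit_homogeneousComponent (d : ℕ) (f : PolyF2 5) :
    psit (homogeneousComponent d f) =
      if 5 ≤ d ∧ Odd d then homogeneousComponent ((d - 5) / 2) (psit f) else 0 := by
  classical
  by_cases h : 5 ≤ d ∧ Odd d
  · rw [if_pos h]
    apply MvPolynomial.ext
    intro w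
    rw [psit_coeff, coeff_homogeneousComponent, coeff_homogeneousComponent, psit_coeff]
    have hdeg : (phiExp w).degree = 2 * mdeg w + 5 := by rw [degree_eq_mdeg, mdeg_phiExp]
    have hwdeg : w.degree = mdeg w := degree_eq_mdeg w
    have hd2 := h.2; rw [Nat.odd_iff] at hd2
    have h5 := h.1
    by_cases hw : w.degree = (d - 5) / 2
    · rw [if_pos hw, if_pos (by rw [hdeg]; omega)]
    · rw [if_neg hw, if_neg (by rw [hdeg]; omega)]
  · rw [if_neg h]
    apply MvPolynomial.ext
    intro w
    rw [psit_coeff, coeff_homogeneousComponent, MvPolynomial.coeff_zero]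
    have hdeg : (phiExp w).degree = 2 * mdeg w + 5 := by rw [degree_eq_mdeg, mdeg_phiExp]
    rw [if_neg]
    rw [hdeg]
    simp only [Nat.odd_iff] at h
    omega
  
lemma psit_mem_homog {f : PolyF2 5} (hf : f ∈ homogSub 5 41) : psit f ∈ homogSub 5 18 := by
  have h41 : homogeneousComponent 41 f = f := by
    rw [homogeneousComponent_of_mem hf, if_pos rfl]
  have h := psit_homogeneousComponent 41 f
  rw [h41, if_pos (by exact ⟨by omega, by decide⟩)] at h
  rw [h]
  have : (41 - 5) / 2 = 18 := by norm_num
  rw [this]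
  exact homogeneousComponent_mem _ _

lemma steenrod_of_homog (n k : ℕ) (g : PolyF2 5) (hg : g ∈ homogSub 5 n) :
    SteenrodSq 5 k g = homogeneousComponent (n + k) (sqTot 5 g) := by
  classical
  by_cases h0 : g = 0
  · subst h0; simp [SteenrodSq]
  · have htd : g.totalDegree = n :=
      MvPolynomial.IsHomogeneous.totalDegree ((mem_homogeneousSubmodule _ _).mp hg) h0
    rw [SteenrodSq, htd]
    rw [Finset.sum_eq_single_of_mem n (Finset.self_mem_range_succ n)]
    · rw [homogeneousComponent_of_mem hg, if_pos rfl]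
    · intro b _ hbn
      rw [homogeneousComponent_of_mem hg, if_neg hbn, map_zero, map_zero]

lemma psit_steenrod_mem (k : ℕ) (hk : 1 ≤ k) (f : PolyF2 5) :
    psit (SteenrodSq 5 k f) ∈ hitSubmodule 5 := by
  rw [SteenrodSq, map_sum]
  apply Submodule.sum_mem
  intro n _
  rw [psit_homogeneousComponent]
  by_cases h1 : 5 ≤ n + k ∧ Odd (n + k)
  · rw [if_pos h1, psit_sqTot, psit_homogeneousComponent]
    by_cases h2 : 5 ≤ n ∧ Odd n
    · rw [if_pos h2]
      set g := homogeneousComponent ((n - 5) / 2) (psit f) with hgdef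
      have hg : g ∈ homogSub 5 ((n - 5) / 2) := homogeneousComponent_mem _ _
      have ho1 := h1.2; have ho2 := h2.2
      rw [Nat.odd_iff] at ho1 ho2
      have hk2 : (n + k - 5) / 2 = (n - 5) / 2 + k / 2 := by omega
      rw [hk2, ← steenrod_of_homog _ _ _ hg]
      apply Submodule.subset_span
      exact ⟨k / 2, by omega, g, rfl⟩
    · rw [if_neg h2, map_zero, map_zero]
      exact Submodule.zero_mem _
  · rw [if_neg h1]; exact Submodule.zero_mem _

lemma psit_hit {f : PolyF2 5} (hf : f ∈ hitSubmodule 5) : psit f ∈ hitSubmodule 5 := by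
  induction hf using Submodule.span_induction with
  | mem x hx =>
    obtain ⟨k, hk, g, rfl⟩ := hx
    exact psit_steenrod_mem k hk g
  | zero => rw [map_zero]; exact Submodule.zero_mem _
  | add x y _ _ hx hy => rw [map_add]; exact Submodule.add_mem _ hx hy
  | smul c x _ hx => rw [map_smul]; exact Submodule.smul_mem _ c hx

noncomputable def psitH : homogSub 5 41 →ₗ[ZMod 2] homogSub 5 18 :=
  psit.restrict (fun x hx => psit_mem_homog hx)

lemma psitH_coe (x : homogSub 5 41) : (psitH x : PolyF2 5) = psit (x : PolyF2 5) :=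
  LinearMap.restrict_coe_apply _ _ _

noncomputable def psi0 : CohitQ 5 41 →ₗ[ZMod 2] CohitQ 5 18 :=
  Submodule.liftQ _ (((hitSubmodule 5).comap (homogSub 5 18).subtype).mkQ.comp psitH)
    (by
      intro x hx
      rw [LinearMap.mem_ker, LinearMap.comp_apply, Submodule.mkQ_apply,
        Submodule.Quotient.mk_eq_zero, Submodule.mem_comap]
      show (psitH x : PolyF2 5) ∈ hitSubmodule 5
      rw [psitH_coe]
      exact psit_hit hx)

lemma psi0_mk (x : homogSub 5 41) :
    psi0 (Submodule.Quotient.mk x) = Submodule.Quotient.mk (psitH x) := by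
  rw [psi0, Submodule.liftQ_apply, LinearMap.comp_apply, Submodule.mkQ_apply]

lemma clsQ_eq {m n : ℕ} (u : Fin m →₀ ℕ) (h : mdeg u = n) :
    clsQ m n u = Submodule.Quotient.mk ⟨monomial u 1, monomial_mem_homogSub u h⟩ := dif_pos h

lemma kameko_psi0 : IsKameko psi0 := by
  intro u hu
  rw [clsQ_eq u hu, psi0_mk]
  by_cases h : ∀ i, Odd (u i)
  · rw [if_pos h]
    have hd : mdeg (halfExp u) = 18 := by
      have h2 := mdeg_halfExp_of_odd h; omega
    rw [clsQ_eq _ hd]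
    congr 1
    apply Subtype.ext
    rw [psitH_coe]
    show psit (monomial u 1) = _
    rw [psit_monomial_one, if_pos h]
  · rw [if_neg h]
    have hz : psitH ⟨monomial u 1, monomial_mem_homogSub u hu⟩ = 0 := by
      apply Subtype.ext
      rw [psitH_coe]
      show psit (monomial u 1) = _
      rw [psit_monomial_one, if_neg h]
      rfl
    rw [hz, Submodule.Quotient.mk_zero]

lemma psi0_clsQ_phiExp {v : Fin 5 →₀ ℕ} (hv : mdeg v = 18) :
    psi0 (clsQ 5 41 (phiExp v)) = clsQ 5 18 v := by
  have h41 : mdeg (phiExp v) = 41 := by rw [mdeg_phiExp, hv]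
  rw [kameko_psi0 _ h41, if_pos (phiExp_oddAll v), halfExp_phiExp]

end KA
namespace KA

open Finsupp Finset MvPolynomial

lemma mdeg_of_mem_support {n : ℕ} (x : homogSub 5 n) {u : Fin 5 →₀ ℕ}
    (hu : u ∈ (x : PolyF2 5).support) : mdeg u = n := by
  have hx : (x : PolyF2 5).IsHomogeneous n := x.2
  have h := hx (MvPolynomial.mem_support_iff.mp hu)
  rw [← degree_eq_mdeg, Finsupp.degree_eq_weight_one]
  exact h

lemma cls_repr {n : ℕ} (x : homogSub 5 n) :
    (Submodule.Quotient.mk x : CohitQ 5 n) =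
      ∑ u ∈ (x : PolyF2 5).support.attach,
        MvPolynomial.coeff u.1 (x : PolyF2 5) • clsQ 5 n u.1 := by
  have hxeq : x = ∑ u ∈ (x : PolyF2 5).support.attach,
      MvPolynomial.coeff u.1 (x : PolyF2 5) •
        (⟨monomial u.1 1, monomial_mem_homogSub u.1 (mdeg_of_mem_support x u.2)⟩ :
          homogSub 5 n) := by
    apply Subtype.ext
    rw [AddSubmonoidClass.coe_finset_sum]
    simp only [SetLike.val_smul]
    calc (x : PolyF2 5)
        = ∑ u ∈ (x : PolyF2 5).support, monomial u (MvPolynomial.coeff u (x : PolyF2 5)) :=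
          (support_sum_monomial_coeff _).symm
      _ = ∑ u ∈ (x : PolyF2 5).support.attach,
            monomial u.1 (MvPolynomial.coeff u.1 (x : PolyF2 5)) :=
          (Finset.sum_attach _ _).symm
      _ = _ := by
          apply Finset.sum_congr rfl
          intro u _
          rw [MvPolynomial.smul_monomial, smul_eq_mul, mul_one]
  rw [← Submodule.mkQ_apply]
  conv_lhs => rw [hxeq]
  rw [map_sum]
  apply Finset.sum_congr rfl
  intro u _
  rw [map_smul, Submodule.mkQ_apply, clsQ_eq u.1 (mdeg_of_mem_support x u.2)]

lemma isKameko_eq_psi0 {ψ : CohitQ 5 41 →ₗ[ZMod 2] CohitQ 5 18} (hψ : IsKameko ψ) :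
    ψ = psi0 := by
  apply LinearMap.ext
  intro q
  obtain ⟨x, rfl⟩ := Submodule.Quotient.mk_surjective _ q
  rw [cls_repr x, map_sum, map_sum]
  apply Finset.sum_congr rfl
  intro u _
  rw [map_smul, map_smul, hψ u.1 (mdeg_of_mem_support x u.2),
    kameko_psi0 u.1 (mdeg_of_mem_support x u.2)]

end KA
namespace KA

open Finsupp Finset

lemma bitAt_le (a t : ℕ) : bitAt a t ≤ 1 := by rw [bitAt]; omega

lemma mParam_le {m : ℕ} (u : Fin m →₀ ℕ) (t : ℕ) : mParam u t ≤ m := by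
  rw [mParam]
  calc ∑ j, bitAt (u j) t ≤ ∑ _j : Fin m, 1 :=
        Finset.sum_le_sum (fun j _ => bitAt_le _ _)
    _ = m := by simp

lemma exp_le_mdeg {m : ℕ} (u : Fin m →₀ ℕ) (i : Fin m) : u i ≤ mdeg u :=
  Finset.single_le_sum (fun j _ => Nat.zero_le _) (Finset.mem_univ i)

lemma mParam_eq_zero {m : ℕ} (u : Fin m →₀ ℕ) (t : ℕ) (h : ∀ j, u j < 2 ^ t) :
    mParam u t = 0 := by
  rw [mParam]
  apply Finset.sum_eq_zero
  intro j _
  simp [bitAt, Nat.div_eq_of_lt (h j)]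

/-- `u` as a function on `ℕ` indices. -/
def uf (u : Fin 5 →₀ ℕ) : ℕ → ℕ := fun j => if h : j < 5 then u ⟨j, h⟩ else 0

lemma uf_fin (u : Fin 5 →₀ ℕ) (i : Fin 5) : uf u (i : ℕ) = u i := by
  rw [uf, dif_pos i.isLt, Fin.eta]

/-- A numeric key realizing the monomial order on degrees `≤ 41`. -/
def key (u : Fin 5 →₀ ℕ) : ℕ :=
  (∑ t ∈ Finset.range 6, mParam u t * 8 ^ (5 - t)) * 2 ^ 30 +
    ∑ j ∈ Finset.range 5, uf u j * 64 ^ (4 - j)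

lemma geom_aux (B : ℕ) (hB : 1 ≤ B) (m : ℕ) :
    ∑ d ∈ Finset.range m, (B - 1) * B ^ d = B ^ m - 1 := by
  induction m with
  | zero => simp
  | succ m ih =>
    rw [Finset.sum_range_succ, ih, pow_succ]
    rw [Nat.mul_comm (B ^ m) B]
    have h1 : (B - 1) * B ^ m = B * B ^ m - B ^ m := by
      rw [Nat.sub_mul, one_mul]
    have h2 : B ^ m ≤ B * B ^ m := Nat.le_mul_of_pos_left _ hB
    have h3 : 1 ≤ B ^ m := Nat.one_le_pow _ _ hB
    generalize hx : B ^ m = x at *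
    generalize hy : B * x = y at *
    generalize hz : (B - 1) * x = z at *
    omega

lemma digits_lt {B k : ℕ} (hB : 0 < B) (a b : ℕ → ℕ) (ha : ∀ j, j < k → a j < B)
    (i : ℕ) (hik : i < k) (hpre : ∀ j, j < i → a j = b j) (hi : a i < b i) :
    ∑ j ∈ Finset.range k, a j * B ^ (k - 1 - j) <
      ∑ j ∈ Finset.range k, b j * B ^ (k - 1 - j) := by
  have hsplit : ∀ c : ℕ → ℕ, ∑ j ∈ Finset.range k, c j * B ^ (k - 1 - j) =
      (∑ j ∈ Finset.range i, c j * B ^ (k - 1 - j)) +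
        ∑ j ∈ Finset.Ico i k, c j * B ^ (k - 1 - j) := by
    intro c
    rw [Finset.range_eq_Ico, ← Finset.sum_Ico_consecutive _ (Nat.zero_le i) (le_of_lt hik),
      ← Finset.range_eq_Ico]
  rw [hsplit a, hsplit b]
  have hprefix : (∑ j ∈ Finset.range i, a j * B ^ (k - 1 - j)) =
      ∑ j ∈ Finset.range i, b j * B ^ (k - 1 - j) := by
    apply Finset.sum_congr rfl
    intro j hj
    rw [hpre j (Finset.mem_range.mp hj)]
  rw [hprefix]
  apply Nat.add_lt_add_left
  -- tail comparison
  set E := B ^ (k - 1 - i) with hE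
  have hE1 : 1 ≤ E := Nat.one_le_pow _ _ hB
  have hbot : ∀ c : ℕ → ℕ, ∑ j ∈ Finset.Ico i k, c j * B ^ (k - 1 - j) =
      c i * E + ∑ j ∈ Finset.Ico (i + 1) k, c j * B ^ (k - 1 - j) := by
    intro c
    rw [Finset.sum_eq_sum_Ico_succ_bot hik]
  rw [hbot a]
  have htail : ∑ j ∈ Finset.Ico (i + 1) k, a j * B ^ (k - 1 - j) ≤ E - 1 := by
    have h1 : ∑ j ∈ Finset.Ico (i + 1) k, a j * B ^ (k - 1 - j) ≤
        ∑ j ∈ Finset.Ico (i + 1) k, (B - 1) * B ^ (k - 1 - j) := by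
      apply Finset.sum_le_sum
      intro j hj
      have := ha j (Finset.mem_Ico.mp hj).2
      exact Nat.mul_le_mul_right _ (by omega)
    have h2 : ∑ j ∈ Finset.Ico (i + 1) k, (B - 1) * B ^ (k - 1 - j) = E - 1 := by
      rw [Finset.sum_Ico_eq_sum_range]
      have hMe : k - 1 - i = k - (i + 1) := by omega
      calc ∑ d ∈ Finset.range (k - (i + 1)), (B - 1) * B ^ (k - 1 - (i + 1 + d))
          = ∑ d ∈ Finset.range (k - (i + 1)),
              (fun d => (B - 1) * B ^ d) ((k - (i + 1)) - 1 - d) := by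
            apply Finset.sum_congr rfl
            intro d _
            simp only
            congr 2
            omega
        _ = ∑ d ∈ Finset.range (k - (i + 1)), (B - 1) * B ^ d :=
            Finset.sum_range_reflect (fun d => (B - 1) * B ^ d) _
        _ = B ^ (k - (i + 1)) - 1 := geom_aux B hB _
        _ = E - 1 := by rw [hE, hMe]
    omega
  have hb_low : b i * E ≤ ∑ j ∈ Finset.Ico i k, b j * B ^ (k - 1 - j) := by
    rw [hbot b]
    exact Nat.le_add_right _ _
  calc a i * E + ∑ j ∈ Finset.Ico (i + 1) k, a j * B ^ (k - 1 - j)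
      ≤ a i * E + (E - 1) := Nat.add_le_add_left htail _
    _ < (a i + 1) * E := by rw [Nat.add_mul, one_mul]; omega
    _ ≤ b i * E := Nat.mul_le_mul_right _ (by omega)
    _ ≤ _ := hb_low

lemma key2_lt (u : Fin 5 →₀ ℕ) (hu : mdeg u ≤ 41) :
    ∑ j ∈ Finset.range 5, uf u j * 64 ^ (4 - j) < 2 ^ 30 := by
  have hsum : ∑ j ∈ Finset.range 5, uf u j = mdeg u := by
    rw [mdeg, ← Fin.sum_univ_eq_sum_range (fun j => uf u j) 5]
    exact Finset.sum_congr rfl (fun i _ => uf_fin u i)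
  calc ∑ j ∈ Finset.range 5, uf u j * 64 ^ (4 - j)
      ≤ ∑ j ∈ Finset.range 5, uf u j * 64 ^ 4 := by
        apply Finset.sum_le_sum
        intro j _
        exact Nat.mul_le_mul_left _ (Nat.pow_le_pow_right (by norm_num) (by omega))
    _ = (∑ j ∈ Finset.range 5, uf u j) * 64 ^ 4 := (Finset.sum_mul _ _ _).symm
    _ ≤ 41 * 64 ^ 4 := Nat.mul_le_mul_right _ (by omega)
    _ < 2 ^ 30 := by norm_num

lemma key_lt_of_monLt {u v : Fin 5 →₀ ℕ} (h : monLt u v) (h41 : mdeg v ≤ 41) :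
    key u < key v := by
  obtain ⟨hdeg, hcase⟩ := h
  have hu41 : mdeg u ≤ 41 := hdeg ▸ h41
  have hub : ∀ i, u i ≤ 41 := fun i => le_trans (exp_le_mdeg u i) hu41
  have hvb : ∀ i, v i ≤ 41 := fun i => le_trans (exp_le_mdeg v i) h41
  rcases hcase with ⟨i, hpre, hlt⟩ | ⟨hp, i, hpre, hlt⟩
  · -- parameter vectors differ
    have hi6 : i < 6 := by
      by_contra hc
      have : mParam v i = 0 := by
        apply mParam_eq_zero
        intro j
        calc v j ≤ 41 := hvb j
          _ < 2 ^ 6 := by norm_num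
          _ ≤ 2 ^ i := Nat.pow_le_pow_right (by norm_num) (by omega)
      omega
    have h1 : ∑ t ∈ Finset.range 6, mParam u t * 8 ^ (5 - t) <
        ∑ t ∈ Finset.range 6, mParam v t * 8 ^ (5 - t) := by
      have := digits_lt (B := 8) (k := 6) (by norm_num) (mParam u) (mParam v)
        (fun j _ => lt_of_le_of_lt (mParam_le u j) (by norm_num)) i hi6 hpre hlt
      simpa using this
    rw [key, key]
    have h2 := key2_lt u hu41
    have h3 : (∑ t ∈ Finset.range 6, mParam u t * 8 ^ (5 - t)) + 1 ≤
        ∑ t ∈ Finset.range 6, mParam v t * 8 ^ (5 - t) := h1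
    calc (∑ t ∈ Finset.range 6, mParam u t * 8 ^ (5 - t)) * 2 ^ 30 +
          ∑ j ∈ Finset.range 5, uf u j * 64 ^ (4 - j)
        < (∑ t ∈ Finset.range 6, mParam u t * 8 ^ (5 - t)) * 2 ^ 30 + 2 ^ 30 := by omega
      _ = ((∑ t ∈ Finset.range 6, mParam u t * 8 ^ (5 - t)) + 1) * 2 ^ 30 := by ring
      _ ≤ (∑ t ∈ Finset.range 6, mParam v t * 8 ^ (5 - t)) * 2 ^ 30 :=
          Nat.mul_le_mul_right _ h3
      _ ≤ _ := Nat.le_add_right _ _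
  · -- parameter vectors equal, exponents differ
    have h1 : ∑ t ∈ Finset.range 6, mParam u t * 8 ^ (5 - t) =
        ∑ t ∈ Finset.range 6, mParam v t * 8 ^ (5 - t) := by
      apply Finset.sum_congr rfl
      intro t _
      rw [hp]
    have h2 : ∑ j ∈ Finset.range 5, uf u j * 64 ^ (4 - j) <
        ∑ j ∈ Finset.range 5, uf v j * 64 ^ (4 - j) := by
      have hufb : ∀ j, j < 5 → uf u j < 64 := by
        intro j hj
        rw [uf, dif_pos hj]
        exact lt_of_le_of_lt (hub _) (by norm_num)
      have hpre' : ∀ j, j < (i : ℕ) → uf u j = uf v j := by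
        intro j hj
        have hj5 : j < 5 := lt_trans hj i.isLt
        rw [uf, uf, dif_pos hj5, dif_pos hj5]
        exact hpre ⟨j, hj5⟩ hj
      have hi' : uf u (i : ℕ) < uf v (i : ℕ) := by
        rw [uf_fin, uf_fin]; exact hlt
      have := digits_lt (B := 64) (k := 5) (by norm_num) (uf u) (uf v)
        hufb (i : ℕ) i.isLt hpre' hi'
      simpa using this
    rw [key, key, h1]
    omega

lemma seq_total {f g : ℕ → ℕ} (h : f ≠ g) : seqLt f g ∨ seqLt g f := by
  classical
  have hex : ∃ t, f t ≠ g t := by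
    by_contra hc; push_neg at hc; exact h (funext hc)
  have ht0 : f (Nat.find hex) ≠ g (Nat.find hex) := Nat.find_spec hex
  have hpre : ∀ j, j < Nat.find hex → f j = g j := fun j hj => by
    by_contra hc; exact Nat.find_min hex hj hc
  rcases Nat.lt_or_ge (f (Nat.find hex)) (g (Nat.find hex)) with hlt | hge
  · exact Or.inl ⟨Nat.find hex, hpre, hlt⟩
  · exact Or.inr ⟨Nat.find hex, fun j hj => (hpre j hj).symm, by omega⟩

lemma expLt_total {u v : Fin 5 →₀ ℕ} (h : u ≠ v) : expLt u v ∨ expLt v u := by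
  classical
  have hex : ∃ i, u i ≠ v i := by
    by_contra hc; push_neg at hc; exact h (Finsupp.ext hc)
  obtain ⟨iw, hiw⟩ := hex
  have hne : (Finset.univ.filter (fun i : Fin 5 => u i ≠ v i)).Nonempty :=
    ⟨iw, Finset.mem_filter.mpr ⟨Finset.mem_univ _, hiw⟩⟩
  set i0 := (Finset.univ.filter (fun i : Fin 5 => u i ≠ v i)).min' hne with hi0
  have hmem : u i0 ≠ v i0 := by
    have h2 := Finset.min'_mem _ hne
    exact (Finset.mem_filter.mp h2).2
  have hpre : ∀ j, j < i0 → u j = v j := by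
    intro j hj
    by_contra hc
    have hle : i0 ≤ j := Finset.min'_le _ j (Finset.mem_filter.mpr ⟨Finset.mem_univ _, hc⟩)
    exact absurd hj (not_lt.mpr hle)
  rcases lt_or_gt_of_ne hmem with hlt | hgt
  · exact Or.inl ⟨i0, hpre, hlt⟩
  · exact Or.inr ⟨i0, fun j hj => (hpre j hj).symm, hgt⟩

lemma monLt_total {u v : Fin 5 →₀ ℕ} (hdeg : mdeg u = mdeg v) (hne : u ≠ v) :
    monLt u v ∨ monLt v u := by
  by_cases hp : mParam u = mParam v
  · rcases expLt_total hne with h | h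
    · exact Or.inl ⟨hdeg, Or.inr ⟨hp, h⟩⟩
    · exact Or.inr ⟨hdeg.symm, Or.inr ⟨hp.symm, h⟩⟩
  · rcases seq_total hp with h | h
    · exact Or.inl ⟨hdeg, Or.inl h⟩
    · exact Or.inr ⟨hdeg.symm, Or.inl h⟩

end KA
namespace KA

open Finsupp Finset MvPolynomial

lemma zmod2_eq_one : ∀ c : ZMod 2, c ≠ 0 → c = 1 := by decide

lemma neg_eq_self {M : Type*} [AddCommGroup M] [Module (ZMod 2) M] (x : M) : -x = x := by
  have h : (-1 : ZMod 2) = 1 := by decide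
  rw [← neg_one_smul (ZMod 2) x, h, one_smul]

lemma sum_cls_mem {n : ℕ} (T : Finset (Fin 5 →₀ ℕ)) (hT : ∀ u ∈ T, mdeg u = n)
    (h0 : ∑ u ∈ T, clsQ 5 n u = 0) :
    (∑ u ∈ T, monomial u (1 : ZMod 2)) ∈ hitSubmodule 5 := by
  classical
  set x : homogSub 5 n :=
    ∑ u ∈ T.attach, ⟨monomial u.1 1, monomial_mem_homogSub u.1 (hT u.1 u.2)⟩ with hx
  have hmk : (Submodule.Quotient.mk x : CohitQ 5 n) = ∑ u ∈ T, clsQ 5 n u := by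
    rw [← Submodule.mkQ_apply, hx, map_sum, ← Finset.sum_attach T (fun u => clsQ 5 n u)]
    apply Finset.sum_congr rfl
    intro u _
    rw [Submodule.mkQ_apply, clsQ_eq u.1 (hT u.1 u.2)]
  have hz : (Submodule.Quotient.mk x : CohitQ 5 n) = 0 := by rw [hmk, h0]
  have hxN : x ∈ (hitSubmodule 5).comap (homogSub 5 n).subtype :=
    (Submodule.Quotient.mk_eq_zero _).mp hz
  have hxmem : (x : PolyF2 5) ∈ hitSubmodule 5 := hxN
  have hxval : (x : PolyF2 5) = ∑ u ∈ T, monomial u 1 := by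
    rw [hx, AddSubmonoidClass.coe_finset_sum,
      ← Finset.sum_attach T (fun u => monomial u (1 : ZMod 2))]
  rwa [hxval] at hxmem

lemma cls_eq_sum {n : ℕ} {u : Fin 5 →₀ ℕ} (hu : mdeg u = n) (S : Finset (Fin 5 →₀ ℕ))
    (hS : ∀ v ∈ S, mdeg v = n)
    (hhit : monomial u (1 : ZMod 2) + ∑ v ∈ S, monomial v (1 : ZMod 2) ∈ hitSubmodule 5) :
    clsQ 5 n u = ∑ v ∈ S, clsQ 5 n v := by
  classical
  set x : homogSub 5 n :=
    ⟨monomial u 1, monomial_mem_homogSub u hu⟩ +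
      ∑ v ∈ S.attach, ⟨monomial v.1 1, monomial_mem_homogSub v.1 (hS v.1 v.2)⟩ with hx
  have hxval : (x : PolyF2 5) = monomial u 1 + ∑ v ∈ S, monomial v 1 := by
    rw [hx]
    push_cast [AddSubmonoidClass.coe_finset_sum]
    rw [← Finset.sum_attach S (fun v => monomial v (1 : ZMod 2))]
  have hxmem : (Submodule.Quotient.mk x : CohitQ 5 n) = 0 := by
    rw [Submodule.Quotient.mk_eq_zero]
    show (x : PolyF2 5) ∈ hitSubmodule 5
    rw [hxval]; exact hhit
  have hmk : (Submodule.Quotient.mk x : CohitQ 5 n) = clsQ 5 n u + ∑ v ∈ S, clsQ 5 n v := by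
    rw [← Submodule.mkQ_apply, hx, map_add, map_sum, Submodule.mkQ_apply,
      ← clsQ_eq u hu, ← Finset.sum_attach S (fun v => clsQ 5 n v)]
    congr 1
    apply Finset.sum_congr rfl
    intro v _
    rw [Submodule.mkQ_apply, clsQ_eq v.1 (hS v.1 v.2)]
  have h2 : clsQ 5 n u + ∑ v ∈ S, clsQ 5 n v = 0 := by rw [← hmk, hxmem]
  have h3 : clsQ 5 n u = -(∑ v ∈ S, clsQ 5 n v) := eq_neg_of_add_eq_zero_left h2
  rw [h3, neg_eq_self]

lemma indep18 (T : Finset (Fin 5 →₀ ℕ)) (hT : ∀ u ∈ T, mdeg u = 18 ∧ Admissible u)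
    (h0 : ∑ u ∈ T, clsQ 5 18 u = 0) : T = ∅ := by
  classical
  by_contra hne
  obtain ⟨u0, hu0, hmax⟩ := Finset.exists_max_image T key (Finset.nonempty_of_ne_empty hne)
  have hhit := sum_cls_mem T (fun u hu => (hT u hu).1) h0
  rw [← Finset.add_sum_erase T _ hu0] at hhit
  apply (hT u0 hu0).2
  refine ⟨T.erase u0, ?_, hhit⟩
  intro v hv
  have hvT := Finset.mem_of_mem_erase hv
  have hvne : v ≠ u0 := Finset.ne_of_mem_erase hv
  have hdeg : mdeg v = mdeg u0 := ((hT v hvT).1).trans ((hT u0 hu0).1).symm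
  rcases monLt_total hdeg hvne with h | h
  · exact h
  · exfalso
    have h1 := key_lt_of_monLt h (by rw [(hT v hvT).1]; norm_num)
    have h2 := hmax v hvT
    omega

/-- The set of classes of admissible monomials of degree 18. -/
def SAdm : Set (CohitQ 5 18) := {q | ∃ v, mdeg v = 18 ∧ Admissible v ∧ q = clsQ 5 18 v}

lemma cls_mem_spanAdm : ∀ (N : ℕ) (u : Fin 5 →₀ ℕ), key u < N → mdeg u = 18 →
    clsQ 5 18 u ∈ Submodule.span (ZMod 2) SAdm := by
  intro N
  induction N with
  | zero => intro u h _; exact absurd h (Nat.not_lt_zero _)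
  | succ N ih =>
    intro u hk hd
    by_cases ha : Admissible u
    · exact Submodule.subset_span ⟨u, hd, ha, rfl⟩
    · rw [Admissible, not_not] at ha
      obtain ⟨S, hS, hhit⟩ := ha
      have hSdeg : ∀ v ∈ S, mdeg v = 18 := fun v hv => ((hS v hv).1).trans hd
      rw [cls_eq_sum hd S hSdeg hhit]
      apply Submodule.sum_mem
      intro v hv
      apply ih v _ (hSdeg v hv)
      have h1 := key_lt_of_monLt (hS v hv) (by omega)
      omega

lemma spanAdm_top (q : CohitQ 5 18) : q ∈ Submodule.span (ZMod 2) SAdm := by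
  obtain ⟨x, rfl⟩ := Submodule.Quotient.mk_surjective _ q
  rw [cls_repr x]
  apply Submodule.sum_mem
  intro u _
  apply Submodule.smul_mem
  exact cls_mem_spanAdm (key u.1 + 1) u.1 (by omega) (mdeg_of_mem_support x u.2)

noncomputable def eW : Wphi →ₗ[ZMod 2] CohitQ 5 18 := psi0.comp Wphi.subtype

lemma eW_apply (x : Wphi) : eW x = psi0 x.1 := rfl

lemma eW_inj : ∀ x : Wphi, eW x = 0 → x = 0 := by
  classical
  intro x hx
  have hmem : (x : CohitQ 5 41) ∈ Submodule.span (ZMod 2)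
      {q | ∃ u : Fin 5 →₀ ℕ, mdeg u = 18 ∧ Admissible u ∧ q = clsQ 5 41 (phiExp u)} := x.2
  rw [Submodule.mem_span_set] at hmem
  obtain ⟨c, hsupp, hsum⟩ := hmem
  have hwit : ∀ q ∈ c.support, ∃ u, mdeg u = 18 ∧ Admissible u ∧ q = clsQ 5 41 (phiExp u) :=
    fun q hq => hsupp hq
  choose w hw1 hw2 hw3 using hwit
  have hsum' : (x : CohitQ 5 41) = ∑ q ∈ c.support, q := by
    rw [← hsum, Finsupp.sum]
    apply Finset.sum_congr rfl
    intro q hq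
    rw [zmod2_eq_one _ (Finsupp.mem_support_iff.mp hq), one_smul]
  set T := c.support.attach.image (fun q => w q.1 q.2) with hT
  have hinj : ∀ q1 ∈ c.support.attach, ∀ q2 ∈ c.support.attach,
      w q1.1 q1.2 = w q2.1 q2.2 → q1 = q2 := by
    intro q1 _ q2 _ heq
    have e1 := hw3 q1.1 q1.2
    have e2 := hw3 q2.1 q2.2
    rw [heq] at e1
    exact Subtype.ext (e1.trans e2.symm)
  have hTsum : ∑ u ∈ T, clsQ 5 18 u = 0 := by
    rw [hT, Finset.sum_image hinj]
    have : ∀ q ∈ c.support.attach, clsQ 5 18 (w q.1 q.2) = psi0 q.1 := by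
      intro q _
      conv_rhs => rw [hw3 q.1 q.2]
      exact (psi0_clsQ_phiExp (hw1 q.1 q.2)).symm
    rw [Finset.sum_congr rfl this, ← map_sum, Finset.sum_attach c.support (fun q => q),
      ← hsum', ← eW_apply, hx]
  have hTprop : ∀ u ∈ T, mdeg u = 18 ∧ Admissible u := by
    intro u hu
    rw [hT, Finset.mem_image] at hu
    obtain ⟨q, _, rfl⟩ := hu
    exact ⟨hw1 q.1 q.2, hw2 q.1 q.2⟩
  have hTe := indep18 T hTprop hTsum
  rw [hT, Finset.image_eq_empty, Finset.attach_eq_empty_iff] at hTe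
  apply Subtype.ext
  rw [hsum', hTe, Finset.sum_empty]
  rfl

lemma eW_surj : ∀ y : CohitQ 5 18, ∃ x : Wphi, eW x = y := by
  have hrange : Submodule.span (ZMod 2) SAdm ≤ LinearMap.range eW := by
    rw [Submodule.span_le]
    rintro q ⟨v, hv18, hvadm, rfl⟩
    have hmem : clsQ 5 41 (phiExp v) ∈ Wphi :=
      Submodule.subset_span ⟨v, hv18, hvadm, rfl⟩
    exact ⟨⟨_, hmem⟩, psi0_clsQ_phiExp hv18⟩
  intro y
  exact hrange (spanAdm_top y)

end KA
/-- The subspace of `Q^{⊗5}_{41}` spanned by the classes `[φ(u)]`, `u` an admissible monomial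
of degree `18`, is isomorphic as an `F_2`-vector space to `Q^{⊗5}_{18}`; moreover
`Q^{⊗5}_{41}` is the direct sum of this subspace and the kernel of Kameko's squaring
operation `(Sq^0_*)_{(5,41)}`. -/
theorem phi_span_iso_and_compl :
    Nonempty (Wphi ≃ₗ[ZMod 2] CohitQ 5 18) ∧
      ∀ ψ : CohitQ 5 41 →ₗ[ZMod 2] CohitQ 5 18, IsKameko ψ →
        IsCompl Wphi (LinearMap.ker ψ) := by
  constructor
  · exact ⟨LinearEquiv.ofBijective KA.eW
      ⟨(injective_iff_map_eq_zero KA.eW).mpr KA.eW_inj, fun y => KA.eW_surj y⟩⟩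
  · intro ψ hψ
    rw [KA.isKameko_eq_psi0 hψ]
    constructor
    · rw [Submodule.disjoint_def]
      intro x hxW hxK
      have h1 : KA.psi0 x = 0 := LinearMap.mem_ker.mp hxK
      have h2 := KA.eW_inj ⟨x, hxW⟩ (by rw [KA.eW_apply]; exact h1)
      exact congrArg Subtype.val h2
    · rw [codisjoint_iff, eq_top_iff]
      intro y _
      obtain ⟨x, hx⟩ := KA.eW_surj (KA.psi0 y)
      refine Submodule.mem_sup.mpr ⟨x.1, x.2, y - x.1, ?_, by abel⟩
      rw [LinearMap.mem_ker, map_sub, ← KA.eW_apply, hx, sub_self]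

end
end

section
/- For every integer m ≥ 7, if X is an admissible monomial of degree 12 in P_m, then Param(X) is one of the seven parameter vectors (4,2,1), (4,4), (6,1,1), (6,3), (8,2), (10,1), (12). -/
open MvPolynomial

noncomputable section AuxDeg12
open Finset
namespace AuxDeg12

variable {m : ℕ}

lemma zmod2_eq_one : ∀ {x : ZMod 2}, x ≠ 0 → x = 1 := by decide

lemma supp_sum (p : PolyF2 m) : ∑ v ∈ p.support, monomial v (1 : ZMod 2) = p := by
  conv_rhs => rw [← support_sum_monomial_coeff p]
  exact Finset.sum_congr rfl fun v hv => by
    rw [zmod2_eq_one (mem_support_iff.mp hv)]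

lemma mdeg_eq_degree (u : Fin m →₀ ℕ) : mdeg u = u.degree := by
  rw [mdeg, Finsupp.degree]
  exact (Finset.sum_subset (Finset.subset_univ _)
    (fun x _ hx => Finsupp.notMem_support_iff.mp hx)).symm

lemma mdeg_add (a b : Fin m →₀ ℕ) : mdeg (a + b) = mdeg a + mdeg b := by
  simp [mdeg, Finset.sum_add_distrib]

lemma mdeg_single (j : Fin m) (k : ℕ) : mdeg (Finsupp.single j k) = k := by
  simp [mdeg, Finsupp.single_apply]

lemma degree_add (a b : Fin m →₀ ℕ) : (a + b).degree = a.degree + b.degree := by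
  rw [← mdeg_eq_degree, ← mdeg_eq_degree, ← mdeg_eq_degree, mdeg_add]

end AuxDeg12

namespace AuxDeg12
variable {m : ℕ}

lemma comp_monomial (n : ℕ) (d : Fin m →₀ ℕ) (c : ZMod 2) :
    homogeneousComponent n (monomial d c) =
      if d.degree = n then monomial d c else 0 := by
  have h : (monomial d c : PolyF2 m) ∈ homogeneousSubmodule (Fin m) (ZMod 2) d.degree := by
    rw [mem_homogeneousSubmodule]
    exact isHomogeneous_monomial _ rfl
  rw [homogeneousComponent_of_mem h]
  by_cases hd : d.degree = n
  · simp [hd]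
  · simp [hd, Ne.symm hd]

lemma comp_mul (n : ℕ) (p q : PolyF2 m) :
    homogeneousComponent n (p * q) =
      ∑ i ∈ Finset.range (n + 1),
        homogeneousComponent i p * homogeneousComponent (n - i) q := by
  ext d
  rw [coeff_homogeneousComponent]
  rw [MvPolynomial.coeff_sum]
  simp_rw [MvPolynomial.coeff_mul, coeff_homogeneousComponent]
  rw [Finset.sum_comm]
  rcases eq_or_ne d.degree n with hd | hd
  · rw [if_pos hd]
    apply Finset.sum_congr rfl
    intro x hx
    have hxd : x.1 + x.2 = d := Finset.HasAntidiagonal.mem_antidiagonal.mp hx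
    have hdeg : x.1.degree + x.2.degree = n := by rw [← hd, ← hxd, degree_add]
    rw [Finset.sum_eq_single_of_mem x.1.degree]
    · rw [if_pos rfl, if_pos (by omega)]
    · exact Finset.mem_range.mpr (by omega)
    · intro i _ hi
      rw [if_neg (fun h => hi h.symm), zero_mul]
  · rw [if_neg hd]
    symm
    apply Finset.sum_eq_zero
    intro x hx
    have hxd : x.1 + x.2 = d := Finset.HasAntidiagonal.mem_antidiagonal.mp hx
    have hdeg : x.1.degree + x.2.degree = d.degree := by rw [← hxd, degree_add]
    apply Finset.sum_eq_zero
    intro i hi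
    have hi' : i ≤ n := by simpa using Nat.lt_succ_iff.mp (Finset.mem_range.mp hi)
    rcases eq_or_ne x.1.degree i with h1 | h1
    · rw [if_pos h1, if_neg (by omega), mul_zero]
    · rw [if_neg h1, zero_mul]

end AuxDeg12

namespace AuxDeg12
variable {m : ℕ}

/-- `Bu u = ∏ (1+X j)^(u j)`. -/
def Bu (u : Fin m →₀ ℕ) : PolyF2 m := u.prod fun j k => (1 + X j) ^ k

lemma Bu_zero : Bu (0 : Fin m →₀ ℕ) = 1 := Finsupp.prod_zero_index

lemma Bu_add (u v : Fin m →₀ ℕ) : Bu (u + v) = Bu u * Bu v :=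
  Finsupp.prod_add_index' (fun j => pow_zero _) (fun j k1 k2 => pow_add _ _ _)

lemma Bu_single (j : Fin m) (k : ℕ) : Bu (Finsupp.single j k) = (1 + X j) ^ k :=
  Finsupp.prod_single_index (pow_zero _)

lemma sqTot_monomial (u : Fin m →₀ ℕ) :
    sqTot m (monomial u 1) = monomial u 1 * Bu u := by
  rw [sqTot, aeval_monomial, map_one, one_mul, monomial_eq, C_1, one_mul, Bu]
  rw [← Finsupp.prod_mul]
  apply Finsupp.prod_congr
  intro j _
  rw [← mul_pow]
  ring

lemma support_one_add_X_pow (j : Fin m) (k : ℕ) :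
    ∀ s ∈ ((1 + X j : PolyF2 m) ^ k).support, s ≤ Finsupp.single j k := by
  induction k with
  | zero =>
    intro s hs
    rw [pow_zero] at hs
    rw [show (1 : PolyF2 m) = monomial 0 1 from rfl, support_monomial,
      if_neg one_ne_zero, Finset.mem_singleton] at hs
    simp [hs]
  | succ k ih =>
    intro s hs
    rw [pow_succ] at hs
    have h2 := MvPolynomial.support_mul _ _ hs
    rw [Finset.mem_add] at h2
    obtain ⟨a, ha, b, hb, rfl⟩ := h2
    have ha' := ih a ha
    have hb' : b ≤ Finsupp.single j 1 := by
      have := MvPolynomial.support_add hb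
      rw [Finset.mem_union] at this
      rcases this with h | h
      · rw [show (1 : PolyF2 m) = monomial 0 1 from rfl, support_monomial,
          if_neg one_ne_zero, Finset.mem_singleton] at h
        simp [h]
      · rw [MvPolynomial.support_X] at h
        rw [Finset.mem_singleton] at h
        exact h.le
    calc a + b ≤ Finsupp.single j k + Finsupp.single j 1 := add_le_add ha' hb'
    _ = Finsupp.single j (k + 1) := by rw [← Finsupp.single_add]

end AuxDeg12

namespace AuxDeg12
variable {m : ℕ}

lemma support_Bu (u : Fin m →₀ ℕ) : ∀ s ∈ (Bu u).support, s ≤ u := by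
  induction u using Finsupp.induction with
  | zero =>
    intro s hs
    rw [Bu_zero, show (1 : PolyF2 m) = monomial 0 1 from rfl, support_monomial,
      if_neg one_ne_zero, Finset.mem_singleton] at hs
    simp [hs]
  | single_add j k u hj hk ih =>
    intro s hs
    rw [Bu_add, Bu_single] at hs
    obtain ⟨a, ha, b, hb, rfl⟩ := Finset.mem_add.mp (MvPolynomial.support_mul _ _ hs)
    exact add_le_add (support_one_add_X_pow j k a ha) (ih b hb)

lemma constantCoeff_Bu (u : Fin m →₀ ℕ) : constantCoeff (Bu u) = 1 := by
  rw [Bu, map_finsuppProd]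
  rw [Finsupp.prod_congr (g2 := fun _ _ => 1)]
  · rw [Finsupp.prod]; exact Finset.prod_const_one
  · intro j _
    rw [map_pow, map_add, map_one, constantCoeff_X, add_zero, one_pow]

lemma comp_zero_Bu (u : Fin m →₀ ℕ) : homogeneousComponent 0 (Bu u) = 1 := by
  rw [homogeneousComponent_zero, show coeff 0 (Bu u) = constantCoeff (Bu u) from rfl,
    constantCoeff_Bu, C_1]

lemma totalDegree_Bu (u : Fin m →₀ ℕ) : (Bu u).totalDegree ≤ u.degree := by
  apply Finset.sup_le
  intro s hs
  have h := support_Bu u s hs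
  show s.sum (fun _ e => e) ≤ u.degree
  rw [show s.sum (fun _ e => e) = s.degree from rfl, ← mdeg_eq_degree, ← mdeg_eq_degree]
  exact Finset.sum_le_sum fun j _ => h j

lemma totalDegree_one_add_X_pow (j : Fin m) (k : ℕ) :
    ((1 + X j : PolyF2 m) ^ k).totalDegree ≤ k := by
  calc ((1 + X j : PolyF2 m) ^ k).totalDegree ≤ k * (1 + X j : PolyF2 m).totalDegree :=
        totalDegree_pow _ _
  _ ≤ k * 1 := by
      apply Nat.mul_le_mul_left
      calc (1 + X j : PolyF2 m).totalDegree ≤ max (1 : PolyF2 m).totalDegree (X j).totalDegree :=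
            totalDegree_add _ _
      _ ≤ 1 := by rw [totalDegree_one, totalDegree_X]; simp
  _ = k := by ring

lemma comp_one_add_X (n : ℕ) (j : Fin m) :
    homogeneousComponent n (1 + X j : PolyF2 m) =
      if n = 0 then 1 else if n = 1 then X j else 0 := by
  rw [map_add, show (1 : PolyF2 m) = monomial 0 1 from rfl,
    show (X j : PolyF2 m) = monomial (Finsupp.single j 1) 1 from rfl,
    comp_monomial, comp_monomial]
  rw [map_zero, show (Finsupp.single j 1).degree = 1 from by
    rw [← mdeg_eq_degree, mdeg_single]]
  rcases n with _ | n
  · simp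
  · rcases n with _ | n <;> simp

lemma comp_self_one_add_X_pow (j : Fin m) (k : ℕ) :
    homogeneousComponent k ((1 + X j : PolyF2 m) ^ k) = X j ^ k := by
  induction k with
  | zero => simp [homogeneousComponent_zero]
  | succ k ih =>
    rw [pow_succ, comp_mul, Finset.sum_eq_single_of_mem k (Finset.mem_range.mpr (by omega))]
    · rw [ih, show k + 1 - k = 1 by omega, comp_one_add_X]
      simp [pow_succ]
    · intro i hi hik
      have hi' := Finset.mem_range.mp hi
      rcases Nat.lt_or_ge i k with h | h
      · rw [comp_one_add_X, if_neg (by omega), if_neg (by omega), mul_zero]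
      · have : i = k + 1 := by omega
        subst this
        rw [homogeneousComponent_eq_zero _ _
          (lt_of_le_of_lt (totalDegree_one_add_X_pow j k) (by omega)), zero_mul]

end AuxDeg12

namespace AuxDeg12
variable {m : ℕ}

lemma comp_top_Bu (u : Fin m →₀ ℕ) :
    homogeneousComponent u.degree (Bu u) = monomial u 1 := by
  induction u using Finsupp.induction with
  | zero =>
    rw [Bu_zero, map_zero, homogeneousComponent_zero]
    simp
  | single_add j k u hj hk ih =>
    rw [Bu_add, Bu_single, degree_add, show (Finsupp.single j k).degree = k from by
      rw [← mdeg_eq_degree, mdeg_single]]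
    rw [comp_mul, Finset.sum_eq_single_of_mem k (Finset.mem_range.mpr (by omega))]
    · rw [comp_self_one_add_X_pow, Nat.add_sub_cancel_left, ih,
        X_pow_eq_monomial, monomial_mul, one_mul]
    · intro i hi hik
      have hi' := Finset.mem_range.mp hi
      rcases Nat.lt_or_ge i k with h | h
      · rw [homogeneousComponent_eq_zero _ _
          (lt_of_le_of_lt (totalDegree_Bu u) (by omega)), mul_zero]
      · rw [homogeneousComponent_eq_zero _ _
          (lt_of_le_of_lt (totalDegree_one_add_X_pow j k) (by omega)), zero_mul]

lemma comp_shift (u : Fin m →₀ ℕ) (k : ℕ) (p : PolyF2 m) :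
    homogeneousComponent (u.degree + k) (monomial u 1 * p) =
      monomial u 1 * homogeneousComponent k p := by
  ext d
  rw [coeff_homogeneousComponent, coeff_monomial_mul', coeff_monomial_mul',
    coeff_homogeneousComponent]
  by_cases hle : u ≤ d
  · have hud : u + (d - u) = d := by
      ext j
      have := hle j
      simp only [Finsupp.coe_add, Finsupp.coe_tsub, Pi.add_apply, Pi.sub_apply]
      omega
    have hdeg : d.degree = u.degree + (d - u).degree := by
      have h := degree_add u (d - u); rw [hud] at h; exact h
    rw [if_pos hle, if_pos hle]
    by_cases h2 : (d - u).degree = k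
    · rw [if_pos h2, if_pos (by omega)]
    · rw [if_neg h2, if_neg (by omega), mul_zero]
  · rw [if_neg hle, if_neg hle, ite_self]

lemma Sq_monomial (k : ℕ) (u : Fin m →₀ ℕ) :
    SteenrodSq m k (monomial u 1) =
      monomial u 1 * homogeneousComponent k (Bu u) := by
  rw [SteenrodSq]
  have hD : (monomial u (1 : ZMod 2)).totalDegree = u.degree := by
    rw [totalDegree_monomial _ one_ne_zero]; rfl
  rw [hD]
  rw [Finset.sum_eq_single_of_mem u.degree (Finset.mem_range.mpr (by omega))]
  · rw [comp_monomial, if_pos rfl, sqTot_monomial, comp_shift]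
  · intro n _ hn
    rw [comp_monomial, if_neg (fun h => hn h.symm), map_zero, map_zero]

lemma comp_mul_one_add_X_pow (j : Fin m) (e n : ℕ) (he : e ≠ 0) (q : PolyF2 m) :
    homogeneousComponent n ((1 + X j ^ e) * q) =
      homogeneousComponent n q +
        (if e ≤ n then X j ^ e * homogeneousComponent (n - e) q else 0) := by
  have hcomp : ∀ i : ℕ, homogeneousComponent i (1 + X j ^ e : PolyF2 m) =
      if i = 0 then 1 else if i = e then X j ^ e else 0 := by
    intro i
    rw [map_add, show (1 : PolyF2 m) = monomial 0 1 from rfl, X_pow_eq_monomial,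
      comp_monomial, comp_monomial, map_zero,
      show (Finsupp.single j e).degree = e from by rw [← mdeg_eq_degree, mdeg_single]]
    rcases eq_or_ne i 0 with h0 | h0
    · subst h0
      rw [if_pos rfl, if_neg he, add_zero, if_pos rfl]
    · rw [if_neg (fun h => h0 h.symm), zero_add, if_neg h0]
      rcases eq_or_ne i e with h1 | h1
      · rw [if_pos h1.symm, if_pos h1]
      · rw [if_neg (fun h => h1 h.symm), if_neg h1]
  rw [comp_mul]
  by_cases hen : e ≤ n
  · rw [if_pos hen]
    rw [← Finset.add_sum_erase _ _ (Finset.mem_range.mpr (show 0 < n + 1 by omega))]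
    rw [Finset.sum_eq_single_of_mem e (Finset.mem_erase.mpr ⟨he, Finset.mem_range.mpr (by omega)⟩)]
    · rw [hcomp, hcomp, if_pos rfl, one_mul, if_neg he, if_pos rfl, Nat.sub_zero]
    · intro i hi hie
      obtain ⟨hi0, hir⟩ := Finset.mem_erase.mp hi
      rw [hcomp, if_neg hi0, if_neg hie, zero_mul]
  · rw [if_neg hen, add_zero]
    rw [Finset.sum_eq_single_of_mem 0 (Finset.mem_range.mpr (by omega))]
    · rw [hcomp, if_pos rfl, one_mul, Nat.sub_zero]
    · intro i hi hi0
      have hi' := Finset.mem_range.mp hi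
      rw [hcomp, if_neg hi0, if_neg (by omega), zero_mul]

lemma sq_mem_hit (k : ℕ) (hk : 1 ≤ k) (f : PolyF2 m) :
    SteenrodSq m k f ∈ hitSubmodule m :=
  Submodule.subset_span ⟨k, hk, f, rfl⟩

lemma monLt_of {v u : Fin m →₀ ℕ} (hdeg : mdeg v = mdeg u)
    (h : mParam v 0 < mParam u 0) : monLt v u :=
  ⟨hdeg, Or.inl ⟨0, fun j hj => absurd hj (Nat.not_lt_zero j), h⟩⟩

lemma nonadm_of (u : Fin m →₀ ℕ) (R : PolyF2 m)
    (hhit : monomial u 1 + R ∈ hitSubmodule m)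
    (hS : ∀ v ∈ R.support, monLt v u) : Nonadmissible u :=
  ⟨R.support, hS, by rwa [supp_sum]⟩

end AuxDeg12

namespace AuxDeg12
variable {m : ℕ}

lemma bitAt_le_one (n t : ℕ) : bitAt n t ≤ 1 := by
  rw [bitAt]; omega

lemma bitAt_zero' (n : ℕ) : bitAt n 0 = n % 2 := by
  rw [bitAt]; simp

lemma bitAt_eq_zero {n : ℕ} (t : ℕ) (h : n < 2 ^ t) : bitAt n t = 0 := by
  rw [bitAt, Nat.div_eq_of_lt h]

lemma bit_expand {n : ℕ} (h : n < 16) :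
    n = bitAt n 0 + 2 * bitAt n 1 + 4 * bitAt n 2 + 8 * bitAt n 3 := by
  rw [bitAt, bitAt, bitAt, bitAt]
  simp only [pow_zero, pow_one, show (2:ℕ)^2 = 4 from rfl, show (2:ℕ)^3 = 8 from rfl]
  omega

lemma u_le {u : Fin m →₀ ℕ} (h : mdeg u = 12) (j : Fin m) : u j ≤ 12 := by
  rw [← h, mdeg]
  exact Finset.single_le_sum (fun i _ => Nat.zero_le _) (Finset.mem_univ j)

lemma param_sum {u : Fin m →₀ ℕ} (h : mdeg u = 12) :
    mParam u 0 + 2 * mParam u 1 + 4 * mParam u 2 + 8 * mParam u 3 = 12 := by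
  have key : ∀ j : Fin m, u j =
      bitAt (u j) 0 + 2 * bitAt (u j) 1 + 4 * bitAt (u j) 2 + 8 * bitAt (u j) 3 :=
    fun j => bit_expand (by have := u_le h j; omega)
  calc mParam u 0 + 2 * mParam u 1 + 4 * mParam u 2 + 8 * mParam u 3
      = ∑ j : Fin m, (bitAt (u j) 0 + 2 * bitAt (u j) 1 + 4 * bitAt (u j) 2
          + 8 * bitAt (u j) 3) := by
        rw [mParam, mParam, mParam, mParam, Finset.mul_sum, Finset.mul_sum, Finset.mul_sum,
          ← Finset.sum_add_distrib, ← Finset.sum_add_distrib, ← Finset.sum_add_distrib]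
  _ = ∑ j : Fin m, u j := Finset.sum_congr rfl fun j _ => (key j).symm
  _ = 12 := h

lemma param_hi {u : Fin m →₀ ℕ} (h : mdeg u = 12) {t : ℕ} (ht : 4 ≤ t) :
    mParam u t = 0 := by
  rw [mParam]
  apply Finset.sum_eq_zero
  intro j _
  apply bitAt_eq_zero
  calc u j ≤ 12 := u_le h j
  _ < 2 ^ 4 := by norm_num
  _ ≤ 2 ^ t := Nat.pow_le_pow_right (by omega) ht

lemma exists_indicator (u : Fin m →₀ ℕ) (t : ℕ) :
    ∃ A : Finset (Fin m), A.card = mParam u t ∧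
      ∀ j, bitAt (u j) t = if j ∈ A then 1 else 0 := by
  refine ⟨Finset.univ.filter (fun j => bitAt (u j) t = 1), ?_, ?_⟩
  · rw [mParam, Finset.card_filter]
    apply Finset.sum_congr rfl
    intro j _
    have := bitAt_le_one (u j) t
    by_cases h : bitAt (u j) t = 1
    · simp [h]
    · simp only [h, if_false]
      omega
  · intro j
    have := bitAt_le_one (u j) t
    by_cases h : bitAt (u j) t = 1
    · simp [h]
    · simp only [Finset.mem_filter, Finset.mem_univ, true_and, h, if_false]
      omega

/-- indicator Finsupp of a finite set -/
def indic (A : Finset (Fin m)) : Fin m →₀ ℕ :=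
  Finsupp.equivFunOnFinite.symm fun j => if j ∈ A then 1 else 0

lemma indic_apply (A : Finset (Fin m)) (j : Fin m) :
    indic A j = if j ∈ A then 1 else 0 := rfl

lemma sum_indicator (A : Finset (Fin m)) :
    ∑ j : Fin m, (if j ∈ A then 1 else 0) = A.card := by
  rw [Finset.sum_ite_mem, Finset.univ_inter, Finset.card_eq_sum_ones]

lemma mdeg_indic (A : Finset (Fin m)) : mdeg (indic A) = A.card := by
  rw [mdeg]
  simp only [indic_apply]
  exact sum_indicator A

lemma parity_helper (A : Finset (Fin m)) (s : Fin m →₀ ℕ) (r : Fin m → ℕ) (v : Fin m →₀ ℕ)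
    (hs : ∀ j, s j ≤ (if j ∈ A then 1 else 0))
    (hv : ∀ j, v j = (if j ∈ A then 1 else 0) + s j + 2 * r j) :
    mParam v 0 + mdeg s = A.card := by
  rw [mParam, mdeg, ← Finset.sum_add_distrib, ← sum_indicator A]
  apply Finset.sum_congr rfl
  intro j _
  rw [bitAt_zero', hv j]
  have := hs j
  split_ifs at this ⊢ <;> omega

lemma support_monomial_mul {w : Fin m →₀ ℕ} {p : PolyF2 m} {v : Fin m →₀ ℕ}
    (hv : v ∈ (monomial w (1 : ZMod 2) * p).support) : ∃ s ∈ p.support, v = w + s := by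
  rw [mem_support_iff, coeff_monomial_mul'] at hv
  by_cases hle : w ≤ v
  · refine ⟨v - w, mem_support_iff.mpr ?_, ?_⟩
    · intro h
      rw [if_pos hle, h, mul_zero] at hv
      exact hv rfl
    · ext j
      have := hle j
      simp only [Finsupp.coe_add, Finsupp.coe_tsub, Pi.add_apply, Pi.sub_apply]
      omega
  · rw [if_neg hle] at hv
    exact absurd rfl hv

lemma support_comp {n : ℕ} {p : PolyF2 m} {s : Fin m →₀ ℕ}
    (hs : s ∈ (homogeneousComponent n p).support) : s ∈ p.support ∧ s.degree = n := by
  rw [mem_support_iff, coeff_homogeneousComponent] at hs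
  by_cases h : s.degree = n
  · exact ⟨mem_support_iff.mpr (by rwa [if_pos h] at hs), h⟩
  · rw [if_neg h] at hs
    exact absurd rfl hs

lemma comp_aux {j : Fin m} {e n : ℕ} (he : e ≠ 0) (hen : e ≤ n) (q : PolyF2 m) :
    homogeneousComponent n ((1 + X j ^ e) * q) =
      homogeneousComponent n q + X j ^ e * homogeneousComponent (n - e) q := by
  rw [comp_mul_one_add_X_pow j e n he, if_pos hen]

lemma comp_aux' {j : Fin m} {e n : ℕ} (he : e ≠ 0) (hen : ¬ e ≤ n) (q : PolyF2 m) :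
    homogeneousComponent n ((1 + X j ^ e) * q) = homogeneousComponent n q := by
  rw [comp_mul_one_add_X_pow j e n he, if_neg hen, add_zero]

lemma comp_aux1 {j : Fin m} {n : ℕ} (hn : 1 ≤ n) (q : PolyF2 m) :
    homogeneousComponent n ((1 + X j) * q) =
      homogeneousComponent n q + X j * homogeneousComponent (n - 1) q := by
  have h := comp_aux (j := j) (e := 1) (n := n) one_ne_zero hn q
  rwa [pow_one] at h

lemma one_add_X_sq (j : Fin m) : (1 + X j : PolyF2 m) ^ 2 = 1 + X j ^ 2 := by
  have h := add_pow_char (1 : PolyF2 m) (X j) 2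
  rwa [one_pow] at h

lemma one_add_X_four (j : Fin m) : (1 + X j : PolyF2 m) ^ 4 = 1 + X j ^ 4 := by
  have : (1 + X j : PolyF2 m) ^ 4 = ((1 + X j) ^ 2) ^ 2 := by ring
  rw [this, one_add_X_sq]
  have h := add_pow_char (1 : PolyF2 m) (X j ^ 2) 2
  rw [one_pow] at h
  rw [h, ← pow_mul]

lemma mono_split (a : Fin m) (α : ℕ) (v : Fin m →₀ ℕ) :
    monomial (Finsupp.single a α + v) (1 : ZMod 2) = X a ^ α * monomial v 1 := by
  rw [X_pow_eq_monomial, monomial_mul, one_mul]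

lemma Bu_decomp (a : Fin m) (α : ℕ) (v : Fin m →₀ ℕ) :
    Bu (Finsupp.single a α + v) = (1 + X a) ^ α * Bu v := by
  rw [Bu_add, Bu_single]

end AuxDeg12

namespace AuxDeg12
variable {m : ℕ}

/-- Case ω₀ = 0 : the monomial is a square, hence hit. -/
lemma case_w0 {u : Fin m →₀ ℕ} (h12 : mdeg u = 12) (h0 : ∀ j, u j % 2 = 0) :
    Nonadmissible u := by
  set w : Fin m →₀ ℕ := Finsupp.equivFunOnFinite.symm (fun j => u j / 2) with hw
  have hwj : ∀ j, w j = u j / 2 := fun j => rfl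
  have hu : u = w + w := by
    ext j
    have := h0 j
    simp only [Finsupp.coe_add, Pi.add_apply, hwj]
    omega
  have hdeg6 : mdeg w = 6 := by
    have : mdeg u = mdeg w + mdeg w := by rw [hu, mdeg_add]
    omega
  apply nonadm_of u 0 _ (by intro v hv; simp at hv)
  rw [add_zero]
  have key := Sq_monomial (m := m) 6 w
  rw [show (6:ℕ) = w.degree from by rw [← mdeg_eq_degree, hdeg6]] at key
  rw [comp_top_Bu, monomial_mul, one_mul, ← hu] at key
  rw [← key]
  apply sq_mem_hit
  rw [← mdeg_eq_degree, hdeg6]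
  omega

/-- Case ω = (8,0,1). -/
lemma case_w801 {u : Fin m →₀ ℕ} (h12 : mdeg u = 12) (A : Finset (Fin m)) (hA : A.card = 8)
    (c : Fin m)
    (hu : ∀ j, u j = (if j ∈ A then 1 else 0) + 4 * (if j = c then 1 else 0)) :
    Nonadmissible u := by
  set w : Fin m →₀ ℕ := indic A + Finsupp.single c 2 with hw
  have hwj : ∀ j, w j = (if j ∈ A then 1 else 0) + 2 * (if j = c then 1 else 0) := by
    intro j
    simp only [hw, Finsupp.coe_add, Pi.add_apply, indic_apply, Finsupp.single_apply]
    split_ifs <;> omega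
  have huw : u = w + Finsupp.single c 2 := by
    ext j
    simp only [Finsupp.coe_add, Pi.add_apply, hwj j, hu j, Finsupp.single_apply]
    split_ifs <;> omega
  have hmdegw : mdeg w = 10 := by rw [hw, mdeg_add, mdeg_indic, mdeg_single, hA]
  have hBu : Bu w = (1 + X c ^ 2) * Bu (indic A) := by
    rw [hw, add_comm (indic A), Bu_add, Bu_single, one_add_X_sq]
  have hc2 : homogeneousComponent 2 (Bu w) =
      homogeneousComponent 2 (Bu (indic A)) + X c ^ 2 := by
    rw [hBu, comp_aux two_ne_zero (le_refl 2), Nat.sub_self, comp_zero_Bu, mul_one]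
  have hrel : monomial u 1 + monomial w 1 * homogeneousComponent 2 (Bu (indic A)) =
      SteenrodSq m 2 (monomial w 1) := by
    rw [Sq_monomial, hc2, mul_add, X_pow_eq_monomial, monomial_mul, mul_one, ← huw, add_comm]
  have hpu : mParam u 0 = 8 := by
    have := parity_helper A 0 (fun j => 2 * (if j = c then 1 else 0)) u
      (by intro j; simp)
      (by intro j; rw [hu j]; simp only [Finsupp.coe_zero, Pi.zero_apply]; split_ifs <;> omega)
    rw [show mdeg (0 : Fin m →₀ ℕ) = 0 from by simp [mdeg], hA] at this
    omega
  apply nonadm_of u (monomial w 1 * homogeneousComponent 2 (Bu (indic A)))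
  · rw [hrel]; exact sq_mem_hit 2 (by omega) _
  · intro v hv
    obtain ⟨s, hs, rfl⟩ := support_monomial_mul hv
    obtain ⟨hsB, hsdeg⟩ := support_comp hs
    have hsle : s ≤ indic A := support_Bu _ s hsB
    have hsle' : ∀ j, s j ≤ (if j ∈ A then 1 else 0) := by
      intro j; have := hsle j; rwa [indic_apply] at this
    have hmdegs : mdeg s = 2 := by rw [mdeg_eq_degree, hsdeg]
    have hmdegv : mdeg (w + s) = mdeg u := by rw [mdeg_add, hmdegw, hmdegs, h12]
    apply monLt_of hmdegv
    have hp := parity_helper A s (fun j => if j = c then 1 else 0) (w + s)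
      hsle' (by
        intro j
        simp only [Finsupp.coe_add, Pi.add_apply, hwj j]
        ring)
    rw [hA] at hp
    omega

/-- Case ω = (4,0,0,1). -/
lemma case_w4001 {u : Fin m →₀ ℕ} (h12 : mdeg u = 12) (A : Finset (Fin m)) (hA : A.card = 4)
    (c : Fin m)
    (hu : ∀ j, u j = (if j ∈ A then 1 else 0) + 8 * (if j = c then 1 else 0)) :
    Nonadmissible u := by
  set w : Fin m →₀ ℕ := indic A + Finsupp.single c 4 with hw
  have hwj : ∀ j, w j = (if j ∈ A then 1 else 0) + 4 * (if j = c then 1 else 0) := by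
    intro j
    simp only [hw, Finsupp.coe_add, Pi.add_apply, indic_apply, Finsupp.single_apply]
    split_ifs <;> omega
  have huw : u = w + Finsupp.single c 4 := by
    ext j
    simp only [Finsupp.coe_add, Pi.add_apply, hwj j, hu j, Finsupp.single_apply]
    split_ifs <;> omega
  have hmdegw : mdeg w = 8 := by rw [hw, mdeg_add, mdeg_indic, mdeg_single, hA]
  have hBu : Bu w = (1 + X c ^ 4) * Bu (indic A) := by
    rw [hw, add_comm (indic A), Bu_add, Bu_single, one_add_X_four]
  have hdegA : (indic A).degree = 4 := by rw [← mdeg_eq_degree, mdeg_indic, hA]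
  have hc4 : homogeneousComponent 4 (Bu w) =
      monomial (indic A) 1 + X c ^ 4 := by
    rw [hBu, comp_aux four_ne_zero (le_refl 4), Nat.sub_self, comp_zero_Bu, mul_one,
      show (4:ℕ) = (indic A).degree from hdegA.symm, comp_top_Bu]
  have hrel : monomial u 1 + monomial (w + indic A) 1 =
      SteenrodSq m 4 (monomial w 1) := by
    rw [Sq_monomial, hc4, mul_add, X_pow_eq_monomial]
    simp only [monomial_mul, mul_one]
    rw [← huw, add_comm]
  apply nonadm_of u (monomial (w + indic A) 1)
  · rw [hrel]; exact sq_mem_hit 4 (by omega) _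
  · intro v hv
    rw [support_monomial, if_neg one_ne_zero, Finset.mem_singleton] at hv
    subst hv
    have hmdegv : mdeg (w + indic A) = mdeg u := by
      rw [mdeg_add, hmdegw, mdeg_indic, hA, h12]
    apply monLt_of hmdegv
    have hpu : mParam u 0 = 4 := by
      have := parity_helper A 0 (fun j => 4 * (if j = c then 1 else 0)) u
        (by intro j; simp)
        (by intro j; rw [hu j]; simp only [Finsupp.coe_zero, Pi.zero_apply]; split_ifs <;> omega)
      rw [show mdeg (0 : Fin m →₀ ℕ) = 0 from by simp [mdeg], hA] at this
      omega
    have hpv : mParam (w + indic A) 0 = 0 := by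
      have := parity_helper (∅ : Finset (Fin m)) 0
        (fun j => (if j ∈ A then 1 else 0) + 2 * (if j = c then 1 else 0)) (w + indic A)
        (by intro j; simp) (by
          intro j
          simp only [Finsupp.coe_add, Pi.add_apply, hwj j, indic_apply, Finsupp.coe_zero,
            Pi.zero_apply, Finset.notMem_empty, if_false]
          split_ifs <;> omega)
      rw [show mdeg (0 : Fin m →₀ ℕ) = 0 from by simp [mdeg], Finset.card_empty] at this
      omega
    omega

end AuxDeg12

namespace AuxDeg12
variable {m : ℕ}

/-- Case ω = (4,0,2). -/
lemma case_w402 {u : Fin m →₀ ℕ} (h12 : mdeg u = 12) (A : Finset (Fin m)) (hA : A.card = 4)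
    (c d : Fin m)
    (hu : ∀ j, u j = (if j ∈ A then 1 else 0)
      + (4 * (if j = c then 1 else 0) + 4 * (if j = d then 1 else 0))) :
    Nonadmissible u := by
  set w : Fin m →₀ ℕ := Finsupp.single c 2 + (Finsupp.single d 2 + indic A) with hw
  have hwj : ∀ j, w j = (if j ∈ A then 1 else 0)
      + (2 * (if j = c then 1 else 0) + 2 * (if j = d then 1 else 0)) := by
    intro j
    simp only [hw, Finsupp.coe_add, Pi.add_apply, indic_apply, Finsupp.single_apply]
    split_ifs <;> omega
  have huw : u = w + Finsupp.single c 2 + Finsupp.single d 2 := by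
    ext j
    simp only [Finsupp.coe_add, Pi.add_apply, hwj j, hu j, Finsupp.single_apply]
    split_ifs <;> omega
  have hmdegw : mdeg w = 8 := by
    rw [hw, mdeg_add, mdeg_add, mdeg_indic, mdeg_single, mdeg_single, hA]
  have hBu : Bu w = (1 + X c ^ 2) * ((1 + X d ^ 2) * Bu (indic A)) := by
    rw [hw, Bu_decomp, Bu_decomp, one_add_X_sq, one_add_X_sq]
  have hdegA : (indic A).degree = 4 := by rw [← mdeg_eq_degree, mdeg_indic, hA]
  have hQ2 : homogeneousComponent 2 ((1 + X d ^ 2) * Bu (indic A)) =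
      homogeneousComponent 2 (Bu (indic A)) + X d ^ 2 := by
    rw [comp_aux two_ne_zero (le_refl 2), Nat.sub_self, comp_zero_Bu, mul_one]
  have hQ4 : homogeneousComponent 4 ((1 + X d ^ 2) * Bu (indic A)) =
      monomial (indic A) 1 + X d ^ 2 * homogeneousComponent 2 (Bu (indic A)) := by
    rw [comp_aux two_ne_zero (by omega : (2:ℕ) ≤ 4), show (4:ℕ) - 2 = 2 from rfl,
      show (4:ℕ) = (indic A).degree from hdegA.symm, comp_top_Bu]
  have hC4 : homogeneousComponent 4 (Bu w) =
      (monomial (indic A) 1 + X d ^ 2 * homogeneousComponent 2 (Bu (indic A)))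
        + X c ^ 2 * (homogeneousComponent 2 (Bu (indic A)) + X d ^ 2) := by
    rw [hBu, comp_aux two_ne_zero (by omega : (2:ℕ) ≤ 4), show (4:ℕ) - 2 = 2 from rfl,
      hQ4, hQ2]
  have e1 : monomial (w + indic A) (1 : ZMod 2) = monomial w 1 * monomial (indic A) 1 := by
    rw [monomial_mul, mul_one]
  have e2 : monomial (w + Finsupp.single d 2) (1 : ZMod 2) = monomial w 1 * X d ^ 2 := by
    rw [X_pow_eq_monomial, monomial_mul, mul_one]
  have e3 : monomial (w + Finsupp.single c 2) (1 : ZMod 2) = monomial w 1 * X c ^ 2 := by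
    rw [X_pow_eq_monomial, monomial_mul, mul_one]
  have e4 : monomial u (1 : ZMod 2) = monomial w 1 * X c ^ 2 * X d ^ 2 := by
    rw [X_pow_eq_monomial, X_pow_eq_monomial, monomial_mul, monomial_mul, mul_one, mul_one, huw]
  have expand : SteenrodSq m 4 (monomial w 1) =
      monomial (w + indic A) 1
        + (monomial (w + Finsupp.single d 2) 1 * homogeneousComponent 2 (Bu (indic A))
          + monomial (w + Finsupp.single c 2) 1 * homogeneousComponent 2 (Bu (indic A)))
        + monomial u 1 := by
    rw [Sq_monomial, hC4, e1, e2, e3, e4]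
    ring
  set R : PolyF2 m := monomial (w + indic A) 1
        + (monomial (w + Finsupp.single d 2) 1 * homogeneousComponent 2 (Bu (indic A))
          + monomial (w + Finsupp.single c 2) 1 * homogeneousComponent 2 (Bu (indic A)))
    with hR
  have hpu : mParam u 0 = 4 := by
    have := parity_helper A 0
      (fun j => 2 * (if j = c then 1 else 0) + 2 * (if j = d then 1 else 0)) u
      (by intro j; simp)
      (by intro j; rw [hu j]; simp only [Finsupp.coe_zero, Pi.zero_apply]; split_ifs <;> omega)
    rw [show mdeg (0 : Fin m →₀ ℕ) = 0 from by simp [mdeg], hA] at this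
    omega
  apply nonadm_of u R
  · have : monomial u 1 + R = SteenrodSq m 4 (monomial w 1) := by rw [expand]; ring
    rw [this]
    exact sq_mem_hit 4 (by omega) _
  · intro v hv
    have hv' := MvPolynomial.support_add hv
    rw [Finset.mem_union] at hv'
    have main : mdeg v = 12 ∧ mParam v 0 ≤ 2 := by
      rcases hv' with h1 | h23
      · rw [support_monomial, if_neg one_ne_zero, Finset.mem_singleton] at h1
        subst h1
        constructor
        · rw [mdeg_add, hmdegw, mdeg_indic, hA]
        · have := parity_helper (∅ : Finset (Fin m)) 0
            (fun j => (if j ∈ A then 1 else 0)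
              + ((if j = c then 1 else 0) + (if j = d then 1 else 0))) (w + indic A)
            (by intro j; simp)
            (by
              intro j
              simp only [Finsupp.coe_add, Pi.add_apply, hwj j, indic_apply, Finsupp.coe_zero,
                Pi.zero_apply, Finset.notMem_empty, if_false]
              split_ifs <;> omega)
          rw [show mdeg (0 : Fin m →₀ ℕ) = 0 from by simp [mdeg], Finset.card_empty] at this
          omega
      · have key : ∀ (e : Fin m),
            v ∈ (monomial (w + Finsupp.single e 2) (1 : ZMod 2)
              * homogeneousComponent 2 (Bu (indic A))).support →
            mdeg v = 12 ∧ mParam v 0 ≤ 2 := by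
          intro e hve
          obtain ⟨s, hs, rfl⟩ := support_monomial_mul hve
          obtain ⟨hsB, hsdeg⟩ := support_comp hs
          have hsle : s ≤ indic A := support_Bu _ s hsB
          have hsle' : ∀ j, s j ≤ (if j ∈ A then 1 else 0) := by
            intro j; have := hsle j; rwa [indic_apply] at this
          have hmdegs : mdeg s = 2 := by rw [mdeg_eq_degree, hsdeg]
          constructor
          · rw [mdeg_add, mdeg_add, hmdegw, mdeg_single, hmdegs]
          · have := parity_helper A s
              (fun j => (if j = c then 1 else 0) + (if j = d then 1 else 0)
                + (if j = e then 1 else 0)) (w + Finsupp.single e 2 + s)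
              hsle'
              (by
                intro j
                simp only [Finsupp.coe_add, Pi.add_apply, hwj j, Finsupp.single_apply]
                split_ifs <;> omega)
            rw [hA, hmdegs] at this
            omega
        rcases Finset.mem_union.mp (MvPolynomial.support_add h23) with h2 | h3
        · exact key d h2
        · exact key c h3
    exact monLt_of (by rw [main.1, h12]) (by rw [hpu]; omega)

end AuxDeg12

namespace AuxDeg12
variable {m : ℕ}

/-- Case ω₀ = 2 : the monomial is hit (χ-trick). -/
lemma case_w2 {u : Fin m →₀ ℕ} (h12 : mdeg u = 12) (a b : Fin m)
    (hu : ∀ j, u j % 2 = (if a = j then 1 else 0) + (if b = j then 1 else 0)) :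
    Nonadmissible u := by
  set r : Fin m →₀ ℕ := Finsupp.equivFunOnFinite.symm (fun j => u j / 2) with hr
  have hrj : ∀ j, r j = u j / 2 := fun j => rfl
  have hur : u = Finsupp.single a 1 + (Finsupp.single b 1 + (r + r)) := by
    ext j
    have h1 := hu j
    simp only [Finsupp.coe_add, Pi.add_apply, Finsupp.single_apply, hrj j]
    split_ifs at h1 ⊢ <;> omega
  have hmdegr : mdeg r = 5 := by
    have : mdeg u = 1 + (1 + (mdeg r + mdeg r)) := by
      rw [hur, mdeg_add, mdeg_add, mdeg_add, mdeg_single, mdeg_single]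
    omega
  have hdegr : r.degree = 5 := by rw [← mdeg_eq_degree, hmdegr]
  have hc5 : homogeneousComponent 5 (Bu r) = monomial r 1 := by
    rw [show (5:ℕ) = r.degree from hdegr.symm, comp_top_Bu]
  set Q1 : PolyF2 m := (1 + X b) * Bu r with hQ1def
  set Q2 : PolyF2 m := (1 + X b ^ 2) * Bu r with hQ2def
  set Q4 : PolyF2 m := (1 + X b ^ 4) * Bu r with hQ4def
  have hQ1 : ∀ n : ℕ, 1 ≤ n → homogeneousComponent n Q1 =
      homogeneousComponent n (Bu r) + X b * homogeneousComponent (n - 1) (Bu r) :=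
    fun n hn => comp_aux1 hn (Bu r)
  have hQ2hi : ∀ n : ℕ, 2 ≤ n → homogeneousComponent n Q2 =
      homogeneousComponent n (Bu r) + X b ^ 2 * homogeneousComponent (n - 2) (Bu r) :=
    fun n hn => comp_aux two_ne_zero hn (Bu r)
  have hQ2lo : homogeneousComponent 1 Q2 = homogeneousComponent 1 (Bu r) :=
    comp_aux' two_ne_zero (by omega) (Bu r)
  have hQ4lo : ∀ n : ℕ, n ≤ 3 → homogeneousComponent n Q4 = homogeneousComponent n (Bu r) :=
    fun n hn => comp_aux' four_ne_zero (by omega) (Bu r)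
  -- the eight generating monomials
  have hBu1 : ∀ v : Fin m →₀ ℕ, Bu (Finsupp.single a 1 + v) = (1 + X a) * Bu v := by
    intro v; rw [Bu_decomp, pow_one]
  have hBu2 : ∀ v : Fin m →₀ ℕ, Bu (Finsupp.single a 2 + v) = (1 + X a ^ 2) * Bu v := by
    intro v; rw [Bu_decomp, one_add_X_sq]
  have hBu4 : ∀ v : Fin m →₀ ℕ, Bu (Finsupp.single a 4 + v) = (1 + X a ^ 4) * Bu v := by
    intro v; rw [Bu_decomp, one_add_X_four]
  have hBv1 : Bu (Finsupp.single b 1 + r) = Q1 := by rw [Bu_decomp, pow_one]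
  have hBv2 : Bu (Finsupp.single b 2 + r) = Q2 := by rw [Bu_decomp, one_add_X_sq]
  have hBv4 : Bu (Finsupp.single b 4 + r) = Q4 := by rw [Bu_decomp, one_add_X_four]
  have hmono : ∀ (α β : ℕ), monomial (Finsupp.single a α + (Finsupp.single b β + r)) (1 : ZMod 2)
      = X a ^ α * (X b ^ β * monomial r 1) := by
    intro α β; rw [mono_split, mono_split]
  -- compute the eight Steenrod squares
  have hG5 : SteenrodSq m 5 (monomial (Finsupp.single a 1 + (Finsupp.single b 1 + r)) 1) =
      X a ^ 1 * (X b ^ 1 * monomial r 1) *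
        ((homogeneousComponent 5 (Bu r) + X b * homogeneousComponent 4 (Bu r))
          + X a * (homogeneousComponent 4 (Bu r) + X b * homogeneousComponent 3 (Bu r))) := by
    rw [Sq_monomial, hmono, hBu1, hBv1, comp_aux1 (by omega), show (5:ℕ) - 1 = 4 from rfl,
      hQ1 5 (by omega), hQ1 4 (by omega), show (5:ℕ) - 1 = 4 from rfl,
      show (4:ℕ) - 1 = 3 from rfl]
  have hG4a : SteenrodSq m 4 (monomial (Finsupp.single a 2 + (Finsupp.single b 1 + r)) 1) =
      X a ^ 2 * (X b ^ 1 * monomial r 1) *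
        ((homogeneousComponent 4 (Bu r) + X b * homogeneousComponent 3 (Bu r))
          + X a ^ 2 * (homogeneousComponent 2 (Bu r) + X b * homogeneousComponent 1 (Bu r))) := by
    rw [Sq_monomial, hmono, hBu2, hBv1, comp_aux two_ne_zero (by omega : (2:ℕ) ≤ 4),
      show (4:ℕ) - 2 = 2 from rfl, hQ1 4 (by omega), hQ1 2 (by omega),
      show (4:ℕ) - 1 = 3 from rfl, show (2:ℕ) - 1 = 1 from rfl]
  have hG4b : SteenrodSq m 4 (monomial (Finsupp.single a 1 + (Finsupp.single b 2 + r)) 1) =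
      X a ^ 1 * (X b ^ 2 * monomial r 1) *
        ((homogeneousComponent 4 (Bu r) + X b ^ 2 * homogeneousComponent 2 (Bu r))
          + X a * (homogeneousComponent 3 (Bu r) + X b ^ 2 * homogeneousComponent 1 (Bu r))) := by
    rw [Sq_monomial, hmono, hBu1, hBv2, comp_aux1 (by omega : (1:ℕ) ≤ 4),
      show (4:ℕ) - 1 = 3 from rfl, hQ2hi 4 (by omega), hQ2hi 3 (by omega),
      show (4:ℕ) - 2 = 2 from rfl, show (3:ℕ) - 2 = 1 from rfl]
  have hG3 : SteenrodSq m 3 (monomial (Finsupp.single a 2 + (Finsupp.single b 2 + r)) 1) =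
      X a ^ 2 * (X b ^ 2 * monomial r 1) *
        ((homogeneousComponent 3 (Bu r) + X b ^ 2 * homogeneousComponent 1 (Bu r))
          + X a ^ 2 * homogeneousComponent 1 (Bu r)) := by
    rw [Sq_monomial, hmono, hBu2, hBv2, comp_aux two_ne_zero (by omega : (2:ℕ) ≤ 3),
      show (3:ℕ) - 2 = 1 from rfl, hQ2hi 3 (by omega), show (3:ℕ) - 2 = 1 from rfl, hQ2lo]
  have hG2a : SteenrodSq m 2 (monomial (Finsupp.single a 4 + (Finsupp.single b 1 + r)) 1) =
      X a ^ 4 * (X b ^ 1 * monomial r 1) *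
        (homogeneousComponent 2 (Bu r) + X b * homogeneousComponent 1 (Bu r)) := by
    rw [Sq_monomial, hmono, hBu4, hBv1, comp_aux' four_ne_zero (by omega : ¬ (4:ℕ) ≤ 2),
      hQ1 2 (by omega), show (2:ℕ) - 1 = 1 from rfl]
  have hG2b : SteenrodSq m 2 (monomial (Finsupp.single a 1 + (Finsupp.single b 4 + r)) 1) =
      X a ^ 1 * (X b ^ 4 * monomial r 1) *
        (homogeneousComponent 2 (Bu r) + X a * homogeneousComponent 1 (Bu r)) := by
    rw [Sq_monomial, hmono, hBu1, hBv4, comp_aux1 (by omega : (1:ℕ) ≤ 2),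
      show (2:ℕ) - 1 = 1 from rfl, hQ4lo 2 (by omega), hQ4lo 1 (by omega)]
  have hG1a : SteenrodSq m 1 (monomial (Finsupp.single a 4 + (Finsupp.single b 2 + r)) 1) =
      X a ^ 4 * (X b ^ 2 * monomial r 1) * homogeneousComponent 1 (Bu r) := by
    rw [Sq_monomial, hmono, hBu4, hBv2, comp_aux' four_ne_zero (by omega : ¬ (4:ℕ) ≤ 1), hQ2lo]
  have hG1b : SteenrodSq m 1 (monomial (Finsupp.single a 2 + (Finsupp.single b 4 + r)) 1) =
      X a ^ 2 * (X b ^ 4 * monomial r 1) * homogeneousComponent 1 (Bu r) := by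
    rw [Sq_monomial, hmono, hBu2, hBv4, comp_aux' two_ne_zero (by omega : ¬ (2:ℕ) ≤ 1),
      hQ4lo 1 (by omega)]
  have hmonou : monomial u (1 : ZMod 2) = X a * (X b * (monomial r 1 * monomial r 1)) := by
    rw [hur, mono_split, mono_split, pow_one, pow_one, monomial_mul, mul_one]
  have hsum : monomial u (1 : ZMod 2) =
      SteenrodSq m 5 (monomial (Finsupp.single a 1 + (Finsupp.single b 1 + r)) 1)
      + SteenrodSq m 4 (monomial (Finsupp.single a 2 + (Finsupp.single b 1 + r)) 1)
      + SteenrodSq m 4 (monomial (Finsupp.single a 1 + (Finsupp.single b 2 + r)) 1)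
      + SteenrodSq m 3 (monomial (Finsupp.single a 2 + (Finsupp.single b 2 + r)) 1)
      + SteenrodSq m 2 (monomial (Finsupp.single a 4 + (Finsupp.single b 1 + r)) 1)
      + SteenrodSq m 2 (monomial (Finsupp.single a 1 + (Finsupp.single b 4 + r)) 1)
      + SteenrodSq m 1 (monomial (Finsupp.single a 4 + (Finsupp.single b 2 + r)) 1)
      + SteenrodSq m 1 (monomial (Finsupp.single a 2 + (Finsupp.single b 4 + r)) 1) := by
    rw [hG5, hG4a, hG4b, hG3, hG2a, hG2b, hG1a, hG1b, hc5, hmonou]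
    have h2 : (2 : PolyF2 m) = 0 := by
      simpa using CharP.cast_eq_zero (PolyF2 m) 2
    have h4 : (4 : PolyF2 m) = 0 := by
      rw [show (4 : PolyF2 m) = 2 * 2 from by norm_num, h2, mul_zero]
    ring_nf
    rw [h2, h4]
    ring
  apply nonadm_of u 0 _ (by intro v hv; simp at hv)
  rw [add_zero, hsum]
  exact Submodule.add_mem _ (Submodule.add_mem _ (Submodule.add_mem _ (Submodule.add_mem _
    (Submodule.add_mem _ (Submodule.add_mem _ (Submodule.add_mem _
      (sq_mem_hit 5 (by omega) _) (sq_mem_hit 4 (by omega) _)) (sq_mem_hit 4 (by omega) _))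
      (sq_mem_hit 3 (by omega) _)) (sq_mem_hit 2 (by omega) _)) (sq_mem_hit 2 (by omega) _))
      (sq_mem_hit 1 (by omega) _)) (sq_mem_hit 1 (by omega) _)

end AuxDeg12

namespace AuxDeg12
variable {m : ℕ}

lemma param_eq_pvec {u : Fin m →₀ ℕ} (h12 : mdeg u = 12) (l : List ℕ) (hlen : l.length ≤ 4)
    (h : ∀ t, t < 4 → mParam u t = pvec l t) : mParam u = pvec l := by
  funext t
  rcases Nat.lt_or_ge t 4 with ht | ht
  · exact h t ht
  · rw [param_hi h12 ht, pvec, List.getD_eq_default _ _ (le_trans hlen ht)]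

lemma param_zero_all {u : Fin m →₀ ℕ} {t : ℕ} (h : mParam u t = 0) (j : Fin m) :
    bitAt (u j) t = 0 := by
  rw [mParam] at h
  exact Finset.sum_eq_zero_iff.mp h j (Finset.mem_univ j)

lemma indicator_one {A : Finset (Fin m)} {c : Fin m} (h : A = {c}) (j : Fin m) :
    (if j ∈ A then 1 else 0 : ℕ) = if j = c then 1 else 0 := by
  subst h; simp [Finset.mem_singleton]

lemma indicator_two {A : Finset (Fin m)} {c d : Fin m} (hcd : c ≠ d) (h : A = {c, d})
    (j : Fin m) :
    (if j ∈ A then 1 else 0 : ℕ) = (if j = c then 1 else 0) + (if j = d then 1 else 0) := by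
  subst h
  by_cases h1 : j = c
  · subst h1; simp [hcd]
  · by_cases h2 : j = d
    · subst h2; simp [h1]
    · simp [h1, h2]

end AuxDeg12

end AuxDeg12

noncomputable section

open AuxDeg12 in
/-- For every `m ≥ 7`, the parameter vector of an admissible monomial of degree `12` in
`P_m` is one of `(4,2,1)`, `(4,4)`, `(6,1,1)`, `(6,3)`, `(8,2)`, `(10,1)`, `(12)`. -/
theorem admissible_deg12_param :
    ∀ m : ℕ, 7 ≤ m → ∀ u : Fin m →₀ ℕ, mdeg u = 12 → Admissible u →
      mParam u = pvec [4,2,1] ∨ mParam u = pvec [4,4] ∨ mParam u = pvec [6,1,1] ∨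
      mParam u = pvec [6,3] ∨ mParam u = pvec [8,2] ∨ mParam u = pvec [10,1] ∨
      mParam u = pvec [12] := by
  intro m _ u h12 hadm
  classical
  have hsum := param_sum h12
  obtain ⟨A0, hA0card, hA0⟩ := exists_indicator u 0
  obtain ⟨A1, hA1card, hA1⟩ := exists_indicator u 1
  obtain ⟨A2, hA2card, hA2⟩ := exists_indicator u 2
  obtain ⟨A3, hA3card, hA3⟩ := exists_indicator u 3
  have hexp : ∀ j, u j = (if j ∈ A0 then 1 else 0) + 2 * (if j ∈ A1 then 1 else 0)
      + 4 * (if j ∈ A2 then 1 else 0) + 8 * (if j ∈ A3 then 1 else 0) := by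
    intro j
    rw [← hA0 j, ← hA1 j, ← hA2 j, ← hA3 j]
    exact bit_expand (by have := u_le h12 j; omega)
  have h0cases : mParam u 0 = 0 ∨ mParam u 0 = 2 ∨ mParam u 0 = 4 ∨ mParam u 0 = 6 ∨
      mParam u 0 = 8 ∨ mParam u 0 = 10 ∨ mParam u 0 = 12 := by omega
  rcases h0cases with h0 | h0 | h0 | h0 | h0 | h0 | h0
  · -- ω₀ = 0 : nonadmissible
    exfalso
    apply hadm
    apply case_w0 h12
    intro j
    rw [← bitAt_zero']
    exact param_zero_all h0 j
  · -- ω₀ = 2 : nonadmissible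
    exfalso
    apply hadm
    obtain ⟨a, b, hab, hA0eq⟩ := Finset.card_eq_two.mp (by rw [hA0card, h0])
    apply case_w2 h12 a b
    intro j
    rw [← bitAt_zero', hA0 j, hA0eq]
    by_cases h1 : j = a
    · subst h1; simp [Ne.symm hab]
    · by_cases h2 : j = b
      · subst h2; simp [hab, Ne.symm h1]
      · simp [h1, h2, Ne.symm h1, Ne.symm h2]
  · -- ω₀ = 4
    have h1cases : mParam u 1 = 0 ∨ mParam u 1 = 2 ∨ mParam u 1 = 4 := by omega
    rcases h1cases with h1 | h1 | h1
    · -- ω₁ = 0 : nonadmissible, ω = (4,0,2) or (4,0,0,1)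
      exfalso
      apply hadm
      have hz1 : ∀ j, (if j ∈ A1 then 1 else 0 : ℕ) = 0 := fun j => by
        rw [← hA1 j]; exact param_zero_all h1 j
      have h2cases : mParam u 2 = 2 ∧ mParam u 3 = 0 ∨ mParam u 2 = 0 ∧ mParam u 3 = 1 := by
        omega
      rcases h2cases with ⟨h2, h3⟩ | ⟨h2, h3⟩
      · obtain ⟨c, d, hcd, hA2eq⟩ := Finset.card_eq_two.mp (by rw [hA2card, h2])
        have hz3 : ∀ j, (if j ∈ A3 then 1 else 0 : ℕ) = 0 := fun j => by
          rw [← hA3 j]; exact param_zero_all h3 j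
        apply case_w402 h12 A0 (by rw [hA0card, h0]) c d
        intro j
        rw [hexp j, hz1 j, hz3 j, indicator_two hcd hA2eq j]
        ring
      · obtain ⟨c, hA3eq⟩ := Finset.card_eq_one.mp (by rw [hA3card, h3])
        have hz2 : ∀ j, (if j ∈ A2 then 1 else 0 : ℕ) = 0 := fun j => by
          rw [← hA2 j]; exact param_zero_all h2 j
        apply case_w4001 h12 A0 (by rw [hA0card, h0]) c
        intro j
        rw [hexp j, hz1 j, hz2 j, indicator_one hA3eq j]
        ring
    · -- ω = (4,2,1)
      refine Or.inl (param_eq_pvec h12 _ (by norm_num) ?_)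
      intro t ht
      interval_cases t <;> simp [pvec] <;> omega
    · -- ω = (4,4)
      refine Or.inr (Or.inl (param_eq_pvec h12 _ (by norm_num) ?_))
      intro t ht
      interval_cases t <;> simp [pvec] <;> omega
  · -- ω₀ = 6 : (6,1,1) or (6,3)
    have h1cases : mParam u 1 = 1 ∨ mParam u 1 = 3 := by omega
    rcases h1cases with h1 | h1
    · refine Or.inr (Or.inr (Or.inl (param_eq_pvec h12 _ (by norm_num) ?_)))
      intro t ht
      interval_cases t <;> simp [pvec] <;> omega
    · refine Or.inr (Or.inr (Or.inr (Or.inl (param_eq_pvec h12 _ (by norm_num) ?_))))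
      intro t ht
      interval_cases t <;> simp [pvec] <;> omega
  · -- ω₀ = 8
    have h1cases : mParam u 1 = 0 ∨ mParam u 1 = 2 := by omega
    rcases h1cases with h1 | h1
    · -- ω = (8,0,1) : nonadmissible
      exfalso
      apply hadm
      have hz1 : ∀ j, (if j ∈ A1 then 1 else 0 : ℕ) = 0 := fun j => by
        rw [← hA1 j]; exact param_zero_all h1 j
      have h2 : mParam u 2 = 1 ∧ mParam u 3 = 0 := by omega
      obtain ⟨c, hA2eq⟩ := Finset.card_eq_one.mp (by rw [hA2card, h2.1])
      have hz3 : ∀ j, (if j ∈ A3 then 1 else 0 : ℕ) = 0 := fun j => by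
        rw [← hA3 j]; exact param_zero_all h2.2 j
      apply case_w801 h12 A0 (by rw [hA0card, h0]) c
      intro j
      rw [hexp j, hz1 j, hz3 j, indicator_one hA2eq j]
      ring
    · refine Or.inr (Or.inr (Or.inr (Or.inr (Or.inl (param_eq_pvec h12 _ (by norm_num) ?_)))))
      intro t ht
      interval_cases t <;> simp [pvec] <;> omega
  · -- ω = (10,1)
    refine Or.inr (Or.inr (Or.inr (Or.inr (Or.inr (Or.inl
      (param_eq_pvec h12 _ (by norm_num) ?_))))))
    intro t ht
    interval_cases t <;> simp [pvec] <;> omega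
  · -- ω = (12)
    refine Or.inr (Or.inr (Or.inr (Or.inr (Or.inr (Or.inr
      (param_eq_pvec h12 _ (by norm_num) ?_))))))
    intro t ht
    interval_cases t <;> simp [pvec] <;> omega

end
end
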